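/- arXiv:1403.0998 — 5 statements merged into one kernel-verified Lean document; each statement's English description precedes it below -/
import Mathlib

section
/- Let X be a real-valued random variable with CDF F, let F⁻(x) := lim_{y↑x} F(y) denote the left limit of F and J(x) := F(x) − F⁻(x) its jump at x. Let V be a random variable uniformly distributed on the interval (0,1) and independent of X, and define W := F(X) − (1 − V)·J(X). Then W is uniformly distributed on the interval (0,1). -/
open MeasureTheory ProbabilityTheory Filter Set

/-- **General probability integral transform, single-variable case.**
Let `X` be a real random variable with CDF `F`, `Fm` the left-limit function of `F`,
and `J := F - Fm` its jump function.  If `V` is uniform on `(0,1)` and independent of `X`,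
then `W := F(X) - (1 - V) * J(X)` is uniformly distributed on `(0,1)`. -/
theorem uniform_of_generalized_PIT
    {Ω : Type*} [MeasurableSpace Ω] (P : Measure Ω) [IsProbabilityMeasure P]
    (X V : Ω → ℝ) (hX : Measurable X) (hV : Measurable V)
    (hVunif : Measure.map V P = volume.restrict (Set.Ioo (0 : ℝ) 1))
    (hindep : IndepFun X V P)
    (F Fm J : ℝ → ℝ)
    (hF : ∀ x, F x = (P (X ⁻¹' Set.Iic x)).toReal)
    (hFm : ∀ x, Tendsto F (nhdsWithin x (Set.Iio x)) (nhds (Fm x)))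
    (hJ : ∀ x, J x = F x - Fm x)
    (W : Ω → ℝ) (hW : ∀ ω, W ω = F (X ω) - (1 - V ω) * J (X ω)) :
    Measure.map W P = volume.restrict (Set.Ioo (0 : ℝ) 1) := by
  classical
  set μ : Measure ℝ := P.map X with hμdef
  set ν : Measure ℝ := volume.restrict (Set.Ioo (0:ℝ) 1) with hνdef
  have hμprob : IsProbabilityMeasure μ := Measure.isProbabilityMeasure_map hX.aemeasurable
  have hνprob : IsProbabilityMeasure ν := by
    constructor
    rw [hνdef, Measure.restrict_apply MeasurableSet.univ, Set.univ_inter, Real.volume_Ioo]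
    norm_num
  -- basic formulas for F
  have hFx : ∀ x, F x = (μ (Set.Iic x)).toReal := by
    intro x
    rw [hF, hμdef, Measure.map_apply hX measurableSet_Iic]
  have hFmono : Monotone F := by
    intro x y hxy
    rw [hFx, hFx]
    exact ENNReal.toReal_mono (measure_ne_top μ _) (measure_mono (Set.Iic_subset_Iic.2 hxy))
  have hFmeas : Measurable F := hFmono.measurable
  -- the left limit formula
  have hseq0 : Tendsto (fun n : ℕ => 1 / ((n : ℝ) + 1)) atTop (nhds 0) :=
    tendsto_one_div_add_atTop_nhds_zero_nat
  have hFmx : ∀ x, Fm x = (μ (Set.Iio x)).toReal := by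
    intro x
    set s : ℕ → ℝ := fun n => x - 1 / ((n : ℝ) + 1) with hsdef
    have hs_lt : ∀ n, s n < x := by
      intro n
      have : (0:ℝ) < 1 / ((n : ℝ) + 1) := by positivity
      simp only [hsdef]
      linarith
    have hs_mono : Monotone fun n => Set.Iic (s n) := by
      intro n m hnm
      apply Set.Iic_subset_Iic.2
      have h1 : (1:ℝ) / ((m : ℝ) + 1) ≤ 1 / ((n : ℝ) + 1) := by
        apply one_div_le_one_div_of_le (by positivity)
        have : (n:ℝ) ≤ m := Nat.cast_le.2 hnm
        linarith
      simp only [hsdef]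
      linarith
    have hU : (⋃ n, Set.Iic (s n)) = Set.Iio x := by
      ext y
      simp only [Set.mem_iUnion, Set.mem_Iic, Set.mem_Iio]
      constructor
      · rintro ⟨n, hn⟩; exact lt_of_le_of_lt hn (hs_lt n)
      · intro hy
        obtain ⟨n, hn⟩ := exists_nat_one_div_lt (sub_pos.2 hy)
        exact ⟨n, by simp only [hsdef]; linarith⟩
    have h1 : Tendsto (fun n => μ (Set.Iic (s n))) atTop (nhds (μ (Set.Iio x))) := by
      have := tendsto_measure_iUnion_atTop (μ := μ) hs_mono
      rwa [hU] at this
    have h2 : Tendsto (fun n => F (s n)) atTop (nhds ((μ (Set.Iio x)).toReal)) := by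
      have := (ENNReal.tendsto_toReal (measure_ne_top μ (Set.Iio x))).comp h1
      convert this using 2 with n
      exact hFx (s n)
    have h3 : Tendsto s atTop (nhdsWithin x (Set.Iio x)) := by
      apply tendsto_nhdsWithin_of_tendsto_nhds_of_eventually_within
      · have h := (tendsto_const_nhds (x := x) (f := atTop (α := ℕ))).sub hseq0
        rw [sub_zero] at h
        exact h
      · exact Eventually.of_forall hs_lt
    exact tendsto_nhds_unique ((hFm x).comp h3) h2
  have hFm_mono : Monotone Fm := by
    intro x y hxy
    rw [hFmx, hFmx]
    exact ENNReal.toReal_mono (measure_ne_top μ _) (measure_mono (Set.Iio_subset_Iio hxy))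
  have hFm_meas : Measurable Fm := hFm_mono.measurable
  have hJmeas : Measurable J := by
    have : J = fun x => F x - Fm x := funext hJ
    rw [this]; exact hFmeas.sub hFm_meas
  have hFm_le_F : ∀ x, Fm x ≤ F x := by
    intro x
    rw [hFmx, hFx]
    exact ENNReal.toReal_mono (measure_ne_top μ _) (measure_mono Set.Iio_subset_Iic_self)
  have hFm_nonneg : ∀ x, 0 ≤ Fm x := fun x => by rw [hFmx]; exact ENNReal.toReal_nonneg
  have hμIio : ∀ x, μ (Set.Iio x) = ENNReal.ofReal (Fm x) := by
    intro x; rw [hFmx, ENNReal.ofReal_toReal (measure_ne_top μ _)]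
  have hμIic : ∀ x, μ (Set.Iic x) = ENNReal.ofReal (F x) := by
    intro x; rw [hFx, ENNReal.ofReal_toReal (measure_ne_top μ _)]
  -- the transfer map
  set φ : ℝ × ℝ → ℝ := fun p => F p.1 - (1 - p.2) * J p.1 with hφdef
  have hφmeas : Measurable φ := by
    apply Measurable.sub
    · exact hFmeas.comp measurable_fst
    · exact (measurable_const.sub measurable_snd).mul (hJmeas.comp measurable_fst)
  have hφeq : ∀ x v, φ (x, v) = Fm x + v * (F x - Fm x) := by
    intro x v
    show F x - (1 - v) * J x = _
    rw [hJ]; ring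
  have hmap : P.map W = (μ.prod ν).map φ := by
    have hpair : P.map (fun ω => (X ω, V ω)) = μ.prod ν := by
      rw [hμdef, ← hVunif]
      exact (indepFun_iff_map_prod_eq_prod_map_map hX.aemeasurable hV.aemeasurable).mp hindep
    rw [← hpair, Measure.map_map hφmeas (hX.prodMk hV)]
    congr 1
    funext ω
    exact hW ω
  -- limits of F at ±∞
  have hFtop : Tendsto F atTop (nhds 1) := by
    have h1 := tendsto_measure_Iic_atTop μ
    rw [measure_univ] at h1
    have h2 := (ENNReal.tendsto_toReal (a := 1) (by norm_num)).comp h1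
    simp only [ENNReal.toReal_one] at h2
    have hFeq : F = fun x => (μ (Set.Iic x)).toReal := funext hFx
    rw [hFeq]
    exact h2
  have hFbot : Tendsto F atBot (nhds 0) := by
    have hI : (⋂ x : ℝ, Set.Iic x) = ∅ := by
      ext y
      simp only [Set.mem_iInter, Set.mem_Iic, Set.mem_empty_iff_false, iff_false, not_forall,
        not_le]
      exact ⟨y - 1, by linarith⟩
    have h1 : Tendsto (fun x => μ (Set.Iic x)) atBot (nhds 0) := by
      have := tendsto_measure_iInter_atBot (μ := μ) (s := fun x : ℝ => Set.Iic x)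
        (fun i => measurableSet_Iic.nullMeasurableSet) (fun a b hab => Set.Iic_subset_Iic.2 hab)
        ⟨0, measure_ne_top μ _⟩
      rwa [hI, measure_empty] at this
    have h2 := (ENNReal.tendsto_toReal (a := 0) (by norm_num)).comp h1
    simp only [ENNReal.toReal_zero] at h2
    have hFeq : F = fun x => (μ (Set.Iic x)).toReal := funext hFx
    rw [hFeq]
    exact h2
  -- the key computation for t ∈ (0,1)
  have key : ∀ t ∈ Set.Ioo (0:ℝ) 1, (μ.prod ν) (φ ⁻¹' Set.Iic t) = ENNReal.ofReal t := by
    rintro t ⟨ht0, ht1⟩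
    set S : Set ℝ := {x | t ≤ F x} with hSdef
    have hSne : S.Nonempty := by
      have := (hFtop.eventually (eventually_ge_nhds ht1)).exists
      obtain ⟨x, hx⟩ := this
      exact ⟨x, hx⟩
    have hSbdd : BddBelow S := by
      obtain ⟨x₀, hx₀⟩ := eventually_atBot.mp (hFbot.eventually (eventually_lt_nhds ht0))
      refine ⟨x₀, fun y hy => ?_⟩
      by_contra hcon
      push_neg at hcon
      exact absurd hy (by simp only [hSdef, Set.mem_setOf_eq, not_le]; exact hx₀ y hcon.le)
    set q : ℝ := sInf S with hqdef
    have hnotS : ∀ y, y < q → F y < t := by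
      intro y hy
      by_contra hcon
      push_neg at hcon
      exact absurd (csInf_le hSbdd hcon) (not_le.2 hy)
    -- t ≤ F q by right continuity
    have hFq : t ≤ F q := by
      have hright : Tendsto (fun n : ℕ => F (q + 1 / ((n:ℝ) + 1))) atTop (nhds (F q)) := by
        have hI : (⋂ n : ℕ, Set.Iic (q + 1 / ((n:ℝ) + 1))) = Set.Iic q := by
          ext y
          simp only [Set.mem_iInter, Set.mem_Iic]
          constructor
          · intro h
            by_contra hcon
            push_neg at hcon
            obtain ⟨n, hn⟩ := exists_nat_one_div_lt (sub_pos.2 hcon)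
            exact absurd (h n) (by linarith)
          · intro h n
            have : (0:ℝ) < 1 / ((n:ℝ) + 1) := by positivity
            linarith
        have h1 : Tendsto (fun n : ℕ => μ (Set.Iic (q + 1 / ((n:ℝ) + 1)))) atTop
            (nhds (μ (Set.Iic q))) := by
          have := tendsto_measure_iInter_atTop (μ := μ)
            (s := fun n : ℕ => Set.Iic (q + 1 / ((n:ℝ) + 1)))
            (fun n => measurableSet_Iic.nullMeasurableSet)
            (fun n m hnm => Set.Iic_subset_Iic.2 (by
              have h1 : (1:ℝ) / ((m : ℝ) + 1) ≤ 1 / ((n : ℝ) + 1) := by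
                apply one_div_le_one_div_of_le (by positivity)
                have : (n:ℝ) ≤ m := Nat.cast_le.2 hnm
                linarith
              linarith))
            ⟨0, measure_ne_top μ _⟩
          rwa [hI] at this
        have := (ENNReal.tendsto_toReal (measure_ne_top μ (Set.Iic q))).comp h1
        rw [← hFx] at this
        convert this using 2 with n
        exact hFx _
      apply ge_of_tendsto' hright
      intro n
      have hq_lt : q < q + 1 / ((n:ℝ) + 1) := by
        have : (0:ℝ) < 1 / ((n:ℝ) + 1) := by positivity
        linarith
      obtain ⟨a, haS, ha⟩ := (csInf_lt_iff hSbdd hSne).mp hq_lt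
      exact le_trans haS (hFmono ha.le)
    -- Fm q ≤ t by left limits
    have hFmq : Fm q ≤ t := by
      apply le_of_tendsto (hFm q)
      apply eventually_nhdsWithin_of_forall
      intro y hy
      exact (hnotS y hy).le
    set a : ℝ := Fm q with hadef
    set b : ℝ := F q with hbdef
    have hab : a ≤ b := hFm_le_F q
    have ha0 : 0 ≤ a := hFm_nonneg q
    have hμq : μ {q} = ENNReal.ofReal (b - a) := by
      have h1 : ({q} : Set ℝ) = Set.Iic q \ Set.Iio q := by
        ext y
        simp only [Set.mem_singleton_iff, Set.mem_diff, Set.mem_Iic, Set.mem_Iio, not_lt]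
        constructor
        · rintro rfl; exact ⟨le_refl _, le_refl _⟩
        · rintro ⟨h1, h2⟩; exact le_antisymm h1 h2
      rw [h1, measure_diff Set.Iio_subset_Iic_self measurableSet_Iio.nullMeasurableSet
        (measure_ne_top μ _), hμIio, hμIic, ← ENNReal.ofReal_sub _ ha0]
    -- the null set N
    set N : Set ℝ := {x | q < x ∧ F x = t} with hNdef
    have hNnull : μ N = 0 := by
      rcases Set.eq_empty_or_nonempty N with hNe | hNe
      · rw [hNe, measure_empty]
      · obtain ⟨x₀, hx₀q, hx₀F⟩ := hNe
        have hFqt : F q = t := le_antisymm (by rw [← hx₀F]; exact hFmono hx₀q.le) hFq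
        have hNbdd : BddAbove N := by
          obtain ⟨M, hM⟩ := eventually_atTop.mp (hFtop.eventually (eventually_gt_nhds ht1))
          refine ⟨M, fun y hy => ?_⟩
          by_contra hcon
          push_neg at hcon
          have h2 := hM y hcon.le
          rw [hy.2] at h2
          exact lt_irrefl t h2
        set u : ℝ := sSup N with hudef
        by_cases hu : u ∈ N
        · have hsub : N ⊆ Set.Ioc q u := fun x hx => ⟨hx.1, le_csSup hNbdd hx⟩
          apply measure_mono_null hsub
          have hIoc : Set.Ioc q u = Set.Iic u \ Set.Iic q := by
            ext y
            simp only [Set.mem_Ioc, Set.mem_diff, Set.mem_Iic, not_le]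
            tauto
          rw [hIoc, measure_diff (Set.Iic_subset_Iic.2 hu.1.le)
            measurableSet_Iic.nullMeasurableSet (measure_ne_top μ _), hμIic, hμIic, hu.2, hFqt,
            tsub_self]
        · have hqu : q < u := lt_of_lt_of_le hx₀q (le_csSup hNbdd ⟨hx₀q, hx₀F⟩)
          have hsub : N ⊆ Set.Ioo q u := by
            intro x hx
            refine ⟨hx.1, lt_of_le_of_ne (le_csSup hNbdd hx) ?_⟩
            rintro rfl
            exact hu hx
          apply measure_mono_null hsub
          have hFmu : Fm u ≤ t := by
            apply le_of_tendsto (hFm u)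
            apply eventually_nhdsWithin_of_forall
            intro y hy
            have hyu : y < u := hy
            obtain ⟨x, hxN, hyx⟩ := exists_lt_of_lt_csSup (⟨x₀, ⟨hx₀q, hx₀F⟩⟩ : N.Nonempty) hyu
            calc F y ≤ F x := hFmono hyx.le
            _ = t := hxN.2
          have hIoo : Set.Ioo q u = Set.Iio u \ Set.Iic q := by
            ext y
            simp only [Set.mem_Ioo, Set.mem_diff, Set.mem_Iio, Set.mem_Iic, not_le]
            tauto
          rw [hIoo, measure_diff (show Set.Iic q ⊆ Set.Iio u from fun y hy => lt_of_le_of_lt hy hqu)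
            measurableSet_Iic.nullMeasurableSet (measure_ne_top μ _), hμIio, hμIic]
          apply tsub_eq_zero_of_le
          apply ENNReal.ofReal_le_ofReal
          rw [hFqt]
          exact hFmu
    -- the set Sq and the simplified event E'
    set Sq : Set ℝ := {v | φ (q, v) ≤ t} with hSqdef
    have hSqmeas : MeasurableSet Sq := by
      have h1 : Sq = (fun v => φ (q, v)) ⁻¹' Set.Iic t := rfl
      rw [h1]
      exact (hφmeas.comp (measurable_const.prodMk measurable_id)) measurableSet_Iic
    set E' : Set (ℝ × ℝ) := (Set.Iio q ×ˢ (Set.univ : Set ℝ)) ∪ ({q} ×ˢ Sq) with hE'def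
    have hνIooC : ν (Set.Ioo (0:ℝ) 1)ᶜ = 0 := by
      rw [hνdef, Measure.restrict_apply measurableSet_Ioo.compl, Set.compl_inter_self,
        measure_empty]
    have hDnull : (μ.prod ν) ((N ×ˢ (Set.univ : Set ℝ)) ∪
        ((Set.univ : Set ℝ) ×ˢ (Set.Ioo (0:ℝ) 1)ᶜ)) = 0 := by
      apply measure_union_null
      · rw [Measure.prod_prod, hNnull, zero_mul]
      · rw [Measure.prod_prod, hνIooC, mul_zero]
    have hsub : ((φ ⁻¹' Set.Iic t) \ E') ∪ (E' \ (φ ⁻¹' Set.Iic t)) ⊆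
        (N ×ˢ (Set.univ : Set ℝ)) ∪ ((Set.univ : Set ℝ) ×ˢ (Set.Ioo (0:ℝ) 1)ᶜ) := by
      rintro ⟨x, v⟩ hxv
      by_cases hv : v ∈ Set.Ioo (0:ℝ) 1
      case neg => exact Or.inr ⟨Set.mem_univ x, hv⟩
      obtain ⟨hv0, hv1⟩ := hv
      left
      rcases hxv with ⟨hE, hnE'⟩ | ⟨hE', hnE⟩
      · rcases lt_trichotomy x q with hlt | heq | hgt
        · exact absurd (Or.inl ⟨hlt, Set.mem_univ v⟩) hnE'
        · refine absurd (Or.inr ⟨Set.mem_singleton_iff.2 heq, ?_⟩) hnE'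
          show φ (q, v) ≤ t
          rw [← heq]
          exact hE
        · have hφxv : Fm x + v * (F x - Fm x) ≤ t := by
            have h2 : φ (x, v) ≤ t := hE
            rw [hφeq x v] at h2
            exact h2
          have hFmx_ge : t ≤ Fm x := by
            refine le_trans hFq ?_
            rw [hbdef, hFx, hFmx]
            exact ENNReal.toReal_mono (measure_ne_top μ _)
              (measure_mono (fun y (hy : y ≤ q) => (lt_of_le_of_lt hy hgt : y < x)))
          have hJx0 : F x = Fm x := by
            by_contra hcon
            have hpos : 0 < F x - Fm x := lt_of_le_of_ne (by linarith [hFm_le_F x])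
              (fun h => hcon (by linarith))
            nlinarith [mul_pos hv0 hpos]
          have hFmt : Fm x ≤ t := by
            rw [hJx0, sub_self, mul_zero, add_zero] at hφxv
            exact hφxv
          exact ⟨⟨hgt, by rw [hJx0]; exact le_antisymm hFmt hFmx_ge⟩, Set.mem_univ v⟩
      · exfalso
        apply hnE
        rcases hE' with ⟨hxq, -⟩ | ⟨hxq, hvSq⟩
        · show φ (x, v) ≤ t
          rw [hφeq x v]
          have hFxt : F x < t := hnotS x hxq
          have hd : 0 ≤ F x - Fm x := by linarith [hFm_le_F x]
          nlinarith
        · have hxq' : x = q := hxq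
          show φ (x, v) ≤ t
          rw [hxq']
          exact hvSq
    have hEE' : (μ.prod ν) (φ ⁻¹' Set.Iic t) = (μ.prod ν) E' := by
      apply measure_congr
      rw [MeasureTheory.ae_eq_set]
      constructor
      · exact measure_mono_null (fun p hp => hsub (Or.inl hp)) hDnull
      · exact measure_mono_null (fun p hp => hsub (Or.inr hp)) hDnull
    have hdisj : Disjoint (Set.Iio q ×ˢ (Set.univ : Set ℝ)) ({q} ×ˢ Sq) := by
      rw [Set.disjoint_left]
      rintro ⟨x, v⟩ h1 h2
      have hx1 : x < q := h1.1
      have hx2 : x = q := h2.1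
      exact absurd (hx2 ▸ hx1) (lt_irrefl q)
    have hmeasB : MeasurableSet ({q} ×ˢ Sq) := (measurableSet_singleton q).prod hSqmeas
    have hE'val : (μ.prod ν) E' = ENNReal.ofReal a + ENNReal.ofReal (b - a) * ν Sq := by
      rw [hE'def, measure_union hdisj hmeasB, Measure.prod_prod, Measure.prod_prod,
        measure_univ, mul_one, hμIio, hμq]
    have hSq_eq : ∀ v, v ∈ Sq ↔ a + v * (b - a) ≤ t := by
      intro v
      have h1 : v ∈ Sq ↔ φ (q, v) ≤ t := Iff.rfl
      rw [h1, hφeq q v]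
    rcases eq_or_lt_of_le hab with heq | hlt
    · have hta : t = a := le_antisymm (heq ▸ hFq) hFmq
      have hSquniv : Sq = Set.univ := by
        ext v
        simp only [Set.mem_univ, iff_true]
        rw [hSq_eq v, ← heq, sub_self, mul_zero, add_zero]
        exact hFmq
      rw [hEE', hE'val, hSquniv, measure_univ, mul_one, ← heq, sub_self, ENNReal.ofReal_zero,
        add_zero, hta]
    · set c : ℝ := (t - a) / (b - a) with hcdef
      have hba : (0:ℝ) < b - a := by linarith
      have hc0 : (0:ℝ) ≤ c := div_nonneg (by linarith) hba.le
      have hc1 : c ≤ 1 := by rw [div_le_one hba]; linarith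
      have hSqIic : Sq = Set.Iic c := by
        ext v
        rw [hSq_eq v]
        simp only [Set.mem_Iic, hcdef]
        rw [le_div_iff₀ hba]
        constructor <;> intro h <;> linarith
      have hνSq : ν Sq = ENNReal.ofReal c := by
        rw [hSqIic, hνdef, Measure.restrict_apply measurableSet_Iic]
        rcases lt_or_eq_of_le hc1 with hc | hc
        · have h2 : Set.Iic c ∩ Set.Ioo (0:ℝ) 1 = Set.Ioc 0 c := by
            ext v
            simp only [Set.mem_inter_iff, Set.mem_Iic, Set.mem_Ioo, Set.mem_Ioc]
            constructor
            · rintro ⟨h1, h2, h3⟩; exact ⟨h2, h1⟩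
            · rintro ⟨h1, h2⟩; exact ⟨h2, h1, lt_of_le_of_lt h2 hc⟩
          rw [h2, Real.volume_Ioc, sub_zero]
        · have h2 : Set.Iic c ∩ Set.Ioo (0:ℝ) 1 = Set.Ioo 0 1 := by
            apply Set.inter_eq_self_of_subset_right
            exact fun v hv => (le_of_lt hv.2).trans_eq hc.symm
          rw [h2, Real.volume_Ioo, ← hc]
          norm_num
      rw [hEE', hE'val, hνSq, ← ENNReal.ofReal_mul (by linarith : (0:ℝ) ≤ b - a),
        ← ENNReal.ofReal_add ha0 (by positivity)]
      congr 1
      rw [hcdef, mul_div_cancel₀ _ hba.ne']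
      ring
  -- conclude
  rw [hmap]
  refine MeasureTheory.Measure.ext_of_Iic _ _ (fun t => ?_)
  rw [Measure.map_apply hφmeas measurableSet_Iic, Measure.restrict_apply measurableSet_Iic]
  have hshift : ∀ n : ℕ, (0:ℝ) < 1 / ((n:ℝ) + 2) ∧ (1:ℝ) / ((n:ℝ) + 2) < 1 := by
    intro n
    constructor
    · positivity
    · rw [div_lt_one (by positivity)]
      have : (0:ℝ) ≤ n := Nat.cast_nonneg n
      linarith
  have htend2 : Tendsto (fun n : ℕ => 1 / ((n:ℝ) + 2)) atTop (nhds 0) := by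
    have h := hseq0.comp (tendsto_add_atTop_nat 1)
    have heq : ((fun n : ℕ => 1 / ((n:ℝ) + 1)) ∘ fun n => n + 1) =
        fun n : ℕ => 1 / ((n:ℝ) + 2) := by
      funext n
      simp only [Function.comp]
      push_cast
      ring_nf
    rwa [heq] at h
  rcases le_or_gt t 0 with ht0 | ht0
  · have hrhs : Set.Iic t ∩ Set.Ioo (0:ℝ) 1 = ∅ := by
      ext v
      simp only [Set.mem_inter_iff, Set.mem_Iic, Set.mem_Ioo, Set.mem_empty_iff_false, iff_false,
        not_and]
      intro h1 h2
      intro h3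
      linarith
    rw [hrhs, measure_empty]
    have hle : ∀ n : ℕ, (μ.prod ν) (φ ⁻¹' Set.Iic t) ≤ ENNReal.ofReal (1 / ((n:ℝ) + 2)) := by
      intro n
      calc (μ.prod ν) (φ ⁻¹' Set.Iic t)
          ≤ (μ.prod ν) (φ ⁻¹' Set.Iic (1 / ((n:ℝ) + 2))) := by
            apply measure_mono
            apply Set.preimage_mono
            apply Set.Iic_subset_Iic.2
            linarith [(hshift n).1]
        _ = ENNReal.ofReal (1 / ((n:ℝ) + 2)) := key _ ⟨(hshift n).1, (hshift n).2⟩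
    have htend : Tendsto (fun n : ℕ => ENNReal.ofReal (1 / ((n:ℝ) + 2))) atTop (nhds 0) := by
      rw [← ENNReal.ofReal_zero]
      exact ENNReal.tendsto_ofReal htend2
    exact le_zero_iff.mp (ge_of_tendsto htend (Eventually.of_forall hle))
  rcases lt_or_ge t 1 with ht1 | ht1
  · have hrhs : Set.Iic t ∩ Set.Ioo (0:ℝ) 1 = Set.Ioc 0 t := by
      ext v
      simp only [Set.mem_inter_iff, Set.mem_Iic, Set.mem_Ioo, Set.mem_Ioc]
      constructor
      · rintro ⟨h1, h2, h3⟩; exact ⟨h2, h1⟩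
      · rintro ⟨h1, h2⟩; exact ⟨h2, h1, lt_of_le_of_lt h2 ht1⟩
    rw [hrhs, Real.volume_Ioc, sub_zero, key t ⟨ht0, ht1⟩]
  · have hrhs : Set.Iic t ∩ Set.Ioo (0:ℝ) 1 = Set.Ioo 0 1 := by
      apply Set.inter_eq_self_of_subset_right
      exact fun v hv => le_trans hv.2.le ht1
    have h11 : ENNReal.ofReal ((1:ℝ) - 0) = 1 := by norm_num
    rw [hrhs, Real.volume_Ioo, h11]
    have hge : ∀ n : ℕ, ENNReal.ofReal (1 - 1 / ((n:ℝ) + 2)) ≤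
        (μ.prod ν) (φ ⁻¹' Set.Iic t) := by
      intro n
      have hmem : (1:ℝ) - 1 / ((n:ℝ) + 2) ∈ Set.Ioo (0:ℝ) 1 := by
        constructor
        · linarith [(hshift n).2]
        · linarith [(hshift n).1]
      rw [← key _ hmem]
      apply measure_mono
      apply Set.preimage_mono
      apply Set.Iic_subset_Iic.2
      linarith [(hshift n).1]
    have htend : Tendsto (fun n : ℕ => ENNReal.ofReal (1 - 1 / ((n:ℝ) + 2))) atTop
        (nhds (ENNReal.ofReal 1)) := by
      apply ENNReal.tendsto_ofReal
      have h := (tendsto_const_nhds (x := (1:ℝ)) (f := atTop (α := ℕ))).sub htend2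
      rwa [sub_zero] at h
    have hone : ENNReal.ofReal (1:ℝ) = 1 := by norm_num
    rw [hone] at htend
    refine le_antisymm prob_le_one ?_
    exact le_of_tendsto htend (Eventually.of_forall hge)
end

section
/- Let X be a real-valued random variable with CDF F, let F⁻ and J be the left-limit and jump functions of F, let V be uniformly distributed on (0,1) and independent of X, and define W := F(X) − (1 − V)·J(X). For 0 < p < 1 define the generalized quantile Q(p) := inf{x : F(x) ≥ p}. Then almost surely, W ≤ p if and only if either X < Q(p), or X = Q(p) and V·J(Q(p)) ≤ p − F⁻(Q(p)). -/
open MeasureTheory ProbabilityTheory Filter Set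
open scoped Topology

/-- Characterization of the event `{W ≤ p}` for the generalized probability integral
transform `W := F(X) - (1 - V) * J(X)`, in terms of the generalized quantile
`Q p := inf {x | F x ≥ p}`:  almost surely, `W ≤ p` iff either `X < Q p`, or
`X = Q p` and `V * J (Q p) ≤ p - Fm (Q p)`. -/
theorem generalized_PIT_event_characterization
    {Ω : Type*} [MeasurableSpace Ω] (P : Measure Ω) [IsProbabilityMeasure P]
    (X V : Ω → ℝ) (hX : Measurable X) (hV : Measurable V)
    (hVunif : Measure.map V P = volume.restrict (Set.Ioo (0 : ℝ) 1))
    (hindep : IndepFun X V P)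
    (F Fm J : ℝ → ℝ)
    (hF : ∀ x, F x = (P (X ⁻¹' Set.Iic x)).toReal)
    (hFm : ∀ x, Tendsto F (nhdsWithin x (Set.Iio x)) (nhds (Fm x)))
    (hJ : ∀ x, J x = F x - Fm x)
    (W : Ω → ℝ) (hW : ∀ ω, W ω = F (X ω) - (1 - V ω) * J (X ω))
    (Q : ℝ → ℝ) (hQ : ∀ p, Q p = sInf {x : ℝ | p ≤ F x}) :
    ∀ p : ℝ, 0 < p → p < 1 →
      ∀ᵐ ω ∂P, (W ω ≤ p ↔
        X ω < Q p ∨ (X ω = Q p ∧ V ω * J (Q p) ≤ p - Fm (Q p))) := by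
  intro p hp0 hp1
  set μ : Measure ℝ := Measure.map X P with hμdef
  have hμprob : IsProbabilityMeasure μ := Measure.isProbabilityMeasure_map hX.aemeasurable
  have hFμ : F = ⇑(cdf μ) := by
    funext x
    rw [hF, cdf_eq_real, measureReal_def, hμdef, Measure.map_apply hX measurableSet_Iic]
  have Fmono : Monotone F := hFμ ▸ monotone_cdf μ
  -- basic facts about the left limit Fm
  have hFm_le_F : ∀ x, Fm x ≤ F x := fun x =>
    le_of_tendsto (hFm x) (eventually_nhdsWithin_of_forall fun z hz => Fmono (le_of_lt hz))
  have hF_le_Fm : ∀ y x : ℝ, y < x → F y ≤ Fm x := by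
    intro y x hyx
    refine ge_of_tendsto (hFm x) (eventually_of_mem (Ioo_mem_nhdsLT_of_mem ⟨hyx, le_rfl⟩)
      fun z hz => Fmono hz.1.le)
  have hJnn : ∀ x, 0 ≤ J x := fun x => by rw [hJ]; linarith [hFm_le_F x]
  -- the set S and the quantile q
  set S : Set ℝ := {x : ℝ | p ≤ F x} with hSdef
  set q : ℝ := Q p with hqdef
  have hq : q = sInf S := hQ p
  have hSne : S.Nonempty := by
    have h1 : Tendsto F atTop (𝓝 1) := hFμ ▸ tendsto_cdf_atTop μ
    obtain ⟨x, hx⟩ := (h1.eventually (eventually_gt_nhds hp1)).exists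
    exact ⟨x, hx.le⟩
  have hSbdd : BddBelow S := by
    have h0 : Tendsto F atBot (𝓝 0) := hFμ ▸ tendsto_cdf_atBot μ
    obtain ⟨b, hb⟩ := (h0.eventually (eventually_lt_nhds hp0)).exists
    refine ⟨b, fun z hz => ?_⟩
    by_contra hcon
    push_neg at hcon
    exact absurd hz (by simp only [hSdef, mem_setOf_eq, not_le]; exact (Fmono hcon.le).trans_lt hb)
  -- F q ≥ p
  have hFq : p ≤ F q := by
    have hgt : ∀ x, q < x → p ≤ F x := by
      intro x hx
      obtain ⟨z, hzS, hzx⟩ := (csInf_lt_iff hSbdd hSne).mp (hq ▸ hx)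
      exact le_trans hzS (Fmono hzx.le)
    have hrc : Tendsto F (𝓝[>] q) (𝓝 (F q)) := by
      have := ((cdf μ).right_continuous q).mono Ioi_subset_Ici_self
      rw [hFμ]
      exact this.tendsto
    exact ge_of_tendsto hrc (eventually_nhdsWithin_of_forall fun x hx => hgt x hx)
  -- Fm q ≤ p
  have hFmq : Fm q ≤ p := by
    refine le_of_tendsto (hFm q) (eventually_nhdsWithin_of_forall fun y hy => ?_)
    have hynot : y ∉ S := notMem_of_lt_csInf (hq ▸ hy) hSbdd
    exact le_of_not_ge hynot
  -- the null set A
  set A : Set ℝ := {x : ℝ | q < x ∧ F x = p} with hAdef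
  have hIoc : ∀ a ∈ A, μ (Ioc q a) = 0 := by
    rintro a ⟨hqa, hFa⟩
    have hFqa : F q = p := le_antisymm (by rw [← hFa]; exact Fmono hqa.le) hFq
    have h1 : μ (Iic a) = μ (Iic q) := by
      rw [← ofReal_cdf μ a, ← ofReal_cdf μ q, ← hFμ] at *
      rw [hFa, hFqa]
    rw [← Iic_sdiff_Iic,
      measure_diff (Iic_subset_Iic.mpr hqa.le) measurableSet_Iic.nullMeasurableSet
        (measure_ne_top μ _), h1, tsub_self]
  have hAnull : μ A = 0 := by
    rcases eq_empty_or_nonempty A with h | hne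
    · simp [h]
    · have hAbdd : BddAbove A := by
        have h1 : Tendsto F atTop (𝓝 1) := hFμ ▸ tendsto_cdf_atTop μ
        obtain ⟨x₁, hx₁⟩ := (h1.eventually (eventually_gt_nhds hp1)).exists
        refine ⟨x₁, fun a ha => ?_⟩
        by_contra hcon
        push_neg at hcon
        exact absurd ha.2 (by have := Fmono hcon.le; intro h; rw [h] at this; linarith)
      by_cases hsA : sSup A ∈ A
      · exact measure_mono_null (fun x (hx : x ∈ A) => show x ∈ Ioc q (sSup A) from ⟨hx.1, le_csSup hAbdd hx⟩) (hIoc _ hsA)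
      · obtain ⟨u, _, hu_tendsto, hu_mem⟩ := exists_seq_tendsto_sSup hne hAbdd
        refine measure_mono_null (fun x hx => ?_)
          (measure_iUnion_null fun n => hIoc _ (hu_mem n))
        have hxs : x < sSup A :=
          lt_of_le_of_ne (le_csSup hAbdd hx) (fun h => hsA (h ▸ hx))
        obtain ⟨n, hn⟩ := (hu_tendsto.eventually (eventually_gt_nhds hxs)).exists
        exact mem_iUnion.2 ⟨n, hx.1, hn.le⟩
  -- a.e. facts
  have hAmeas : MeasurableSet A := by
    have : A = Ioi q ∩ F ⁻¹' {p} := by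
      ext x; simp [hAdef, and_comm]
    rw [this]
    exact measurableSet_Ioi.inter (Fmono.measurable (measurableSet_singleton p))
  have hXA : ∀ᵐ ω ∂P, X ω ∉ A := by
    have hP : P (X ⁻¹' A) = 0 := by
      rw [← Measure.map_apply hX hAmeas, ← hμdef]; exact hAnull
    rw [ae_iff]
    simp only [not_not]; exact hP
  have hVmem : ∀ᵐ ω ∂P, V ω ∈ Ioo (0 : ℝ) 1 := by
    have hP : P (V ⁻¹' (Ioo (0 : ℝ) 1)ᶜ) = 0 := by
      rw [← Measure.map_apply hV measurableSet_Ioo.compl, hVunif,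
        Measure.restrict_apply measurableSet_Ioo.compl, compl_inter_self, measure_empty]
    rw [ae_iff]
    exact hP
  filter_upwards [hVmem, hXA] with ω hVω hAω
  have hv0 : 0 < V ω := hVω.1
  have hv1 : V ω < 1 := hVω.2
  have hJq : J q = F q - Fm q := hJ q
  rcases lt_trichotomy (X ω) q with hlt | heq | hgt
  · constructor
    · intro _; exact Or.inl hlt
    · intro _
      rw [hW]
      have h1 : F (X ω) ≤ Fm q := hF_le_Fm _ _ hlt
      have h2 : 0 ≤ (1 - V ω) * J (X ω) := mul_nonneg (by linarith) (hJnn _)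
      linarith
  · rw [hW, heq]
    have hring : F q - (1 - V ω) * J q = Fm q + V ω * J q := by rw [hJq]; ring
    constructor
    · intro hle
      right
      exact ⟨rfl, by linarith⟩
    · rintro (h1 | ⟨_, h2⟩)
      · exact absurd h1 (lt_irrefl q)
      · linarith
  · have h1 : p ≤ Fm (X ω) := le_trans hFq (hF_le_Fm q (X ω) hgt)
    have hWr : W ω = Fm (X ω) + V ω * J (X ω) := by rw [hW, hJ]; ring
    have hJx : 0 ≤ J (X ω) := hJnn _
    constructor
    · intro hle
      exfalso
      have hxA : ¬(q < X ω ∧ F (X ω) = p) := hAω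
      rcases eq_or_lt_of_le h1 with hpeq | hplt
      · have hJpos : 0 < J (X ω) := by
          rcases eq_or_lt_of_le hJx with hJ0 | hJp
          · exact absurd ⟨hgt, by have := hJ (X ω); linarith⟩ hxA
          · exact hJp
        have : 0 < V ω * J (X ω) := mul_pos hv0 hJpos
        linarith
      · have : 0 ≤ V ω * J (X ω) := mul_nonneg hv0.le hJx
        linarith
    · rintro (h2 | ⟨h2, _⟩)
      · exact absurd h2 (not_lt.mpr hgt.le)
      · exact absurd h2 (ne_of_gt hgt)
end

section
/- Let (Ω, ℱ, P) be a probability space, 𝒢 ⊆ ℱ a sub-σ-algebra, and X a real-valued random variable. Let κ be a regular conditional distribution of X given 𝒢, and for ω ∈ Ω set F(x|ω) := κ(ω)((−∞, x]), with F⁻(x|ω) its left limit in x and J(x|ω) := F(x|ω) − F⁻(x|ω). Let V be uniformly distributed on (0,1) and independent of the σ-algebra generated by 𝒢 and X, and define W(ω) := F(X(ω)|ω) − (1 − V(ω))·J(X(ω)|ω). Then W is uniformly distributed on (0,1) and W is independent of 𝒢. -/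
open MeasureTheory ProbabilityTheory Filter Set
open scoped ENNReal


lemma cover_zero (μ : Measure ℝ) {S : Set ℝ} (h : ∀ x ∈ S, μ (S ∩ Iic x) = 0) : μ S = 0 := by
  rcases S.eq_empty_or_nonempty with rfl | hne
  · simp
  have key : ∀ f : ℕ → ℝ, (∀ n, f n ∈ S) → S ⊆ ⋃ n, (S ∩ Iic (f n)) → μ S = 0 := by
    intro f hfS hcov
    refine measure_mono_null hcov (le_antisymm ((measure_iUnion_le _).trans_eq ?_) (zero_le))
    simp only [fun n => h (f n) (hfS n), tsum_zero]
  by_cases hbd : BddAbove S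
  · by_cases hmem : sSup S ∈ S
    · exact measure_mono_null (fun y hy => mem_inter hy (le_csSup hbd hy)) (h _ hmem)
    · have hlt : ∀ n : ℕ, ∃ x ∈ S, sSup S - 1/(n+1) < x := fun n =>
        exists_lt_of_lt_csSup hne (by
          have : (0:ℝ) < 1/(n+1) := by positivity
          linarith)
      choose f hfS hflt using hlt
      refine key f hfS fun s hs => ?_
      have hslt : s < sSup S := lt_of_le_of_ne (le_csSup hbd hs) (fun he => hmem (he ▸ hs))
      obtain ⟨n, hn⟩ := exists_nat_one_div_lt (sub_pos.mpr hslt)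
      refine mem_iUnion.mpr ⟨n, hs, ?_⟩
      have := hflt n
      simp only [mem_Iic]
      push_cast at hn ⊢
      linarith
  · have hlt : ∀ n : ℕ, ∃ x ∈ S, (n:ℝ) < x := by
      intro n
      obtain ⟨x, hx, hnx⟩ := not_bddAbove_iff.mp hbd n
      exact ⟨x, hx, hnx⟩
    choose f hfS hflt using hlt
    refine key f hfS fun s hs => ?_
    obtain ⟨n, hn⟩ := exists_nat_ge s
    exact mem_iUnion.mpr ⟨n, hs, le_of_lt (lt_of_le_of_lt hn (hflt n))⟩

lemma vol_Iic (c : ℝ) :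
    volume.restrict (Ioo (0:ℝ) 1) (Iic c) = ENNReal.ofReal (min c 1) := by
  rw [Measure.restrict_apply measurableSet_Iic]
  rcases le_or_gt 1 c with h | h
  · have : Iic c ∩ Ioo (0:ℝ) 1 = Ioo 0 1 :=
      inter_eq_self_of_subset_right (fun x hx => le_trans hx.2.le h)
    rw [this, Real.volume_Ioo, min_eq_right h]; norm_num
  · have : Iic c ∩ Ioo (0:ℝ) 1 = Ioc 0 c := by
      ext x
      simp only [mem_inter_iff, mem_Iic, mem_Ioo, mem_Ioc]
      constructor
      · rintro ⟨h1, h2, _⟩; exact ⟨h2, h1⟩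
      · rintro ⟨h1, h2⟩; exact ⟨h2, h1, lt_of_le_of_lt h2 h⟩
    rw [this, Real.volume_Ioc, min_eq_left h.le]; simp

lemma vol_univ : volume.restrict (Ioo (0:ℝ) 1) (univ : Set ℝ) = 1 := by
  rw [Measure.restrict_apply_univ, Real.volume_Ioo]; norm_num

lemma pit_pointwise (μ : Measure ℝ) [IsProbabilityMeasure μ] (t : ℝ) :
    ∫⁻ x, volume.restrict (Ioo (0:ℝ) 1)
        {v | (μ (Iic x)).toReal - (1 - v) * ((μ (Iic x)).toReal - (μ (Iio x)).toReal) ≤ t} ∂μ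
      = volume.restrict (Ioo (0:ℝ) 1) (Iic t) := by
  set ν := volume.restrict (Ioo (0:ℝ) 1) with hν
  set F : ℝ → ℝ := fun x => (μ (Iic x)).toReal with hF
  set Fm : ℝ → ℝ := fun x => (μ (Iio x)).toReal with hFm
  have hfin : ∀ s : Set ℝ, μ s ≠ ∞ := fun s => measure_ne_top μ s
  have hF0 : ∀ x, 0 ≤ F x := fun x => ENNReal.toReal_nonneg
  have hFm0 : ∀ x, 0 ≤ Fm x := fun x => ENNReal.toReal_nonneg
  have hF1 : ∀ x, F x ≤ 1 := fun x => by
    have := prob_le_one (μ := μ) (s := Iic x)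
    simpa [hF] using ENNReal.toReal_mono (by simp) this
  have hFmle : ∀ x, Fm x ≤ F x := fun x =>
    ENNReal.toReal_mono (hfin _) (measure_mono Iio_subset_Iic_self)
  have hFmono : ∀ x y, x ≤ y → F x ≤ F y := fun x y h =>
    ENNReal.toReal_mono (hfin _) (measure_mono (Iic_subset_Iic.mpr h))
  set g : ℝ → ℝ≥0∞ := fun x =>
    if F x - Fm x = 0 then (if F x ≤ t then 1 else 0)
    else ENNReal.ofReal (min ((t - Fm x) / (F x - Fm x)) 1) with hg
  have hinner : ∀ x, ν {v | F x - (1 - v) * (F x - Fm x) ≤ t} = g x := by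
    intro x
    have hsetr : {v : ℝ | F x - (1 - v) * (F x - Fm x) ≤ t}
        = {v : ℝ | Fm x + v * (F x - Fm x) ≤ t} := by
      ext v; simp only [mem_setOf_eq]; constructor <;> intro h <;> nlinarith
    rw [hsetr]
    by_cases hJ : F x - Fm x = 0
    · by_cases hFt : F x ≤ t
      · have h1 : {v : ℝ | Fm x + v * (F x - Fm x) ≤ t} = univ := by
          refine eq_univ_of_forall fun v => ?_
          simp only [mem_setOf_eq, hJ, mul_zero, add_zero]
          nlinarith [sub_eq_zero.mp hJ]
        rw [h1, vol_univ]
        simp [hg, hJ, hFt]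
      · have h1 : {v : ℝ | Fm x + v * (F x - Fm x) ≤ t} = (∅ : Set ℝ) := by
          refine eq_empty_iff_forall_notMem.mpr fun v hv => ?_
          simp only [mem_setOf_eq, hJ, mul_zero, add_zero] at hv
          have := sub_eq_zero.mp hJ
          exact hFt (by linarith)
        rw [h1, measure_empty]
        simp [hg, hJ, hFt]
    · have hJpos : 0 < F x - Fm x := lt_of_le_of_ne (sub_nonneg.mpr (hFmle x)) (Ne.symm hJ)
      have h1 : {v : ℝ | Fm x + v * (F x - Fm x) ≤ t} = Iic ((t - Fm x) / (F x - Fm x)) := by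
        ext v
        simp only [mem_setOf_eq, mem_Iic, le_div_iff₀ hJpos]
        constructor <;> intro h <;> linarith
      rw [h1, vol_Iic]
      simp [hg, hJ]
  rw [lintegral_congr hinner, vol_Iic]
  rcases le_or_gt t 0 with ht0 | ht0
  · -- t ≤ 0 : integral is 0
    have hmin : min t 1 ≤ 0 := le_trans (min_le_left _ _) ht0
    rw [ENNReal.ofReal_eq_zero.mpr hmin]
    have hBnull : μ {x | μ (Iic x) = 0} = 0 :=
      cover_zero μ fun x hx => measure_mono_null inter_subset_right hx
    have hae : g =ᵐ[μ] 0 := by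
      rw [Filter.EventuallyEq, ae_iff]
      refine measure_mono_null ?_ hBnull
      intro x hx
      simp only [mem_setOf_eq, Pi.zero_apply] at hx ⊢
      by_contra hxB
      apply hx
      simp only [hg]
      by_cases hJ : F x - Fm x = 0
      · rw [if_pos hJ, if_neg]
        intro hFt
        have hFx : F x = 0 := le_antisymm (le_trans hFt ht0) (hF0 x)
        exact hxB (by simpa [hF, ENNReal.toReal_eq_zero_iff, hfin (Iic x)] using hFx)
      · rw [if_neg hJ]
        have hJpos : 0 < F x - Fm x := lt_of_le_of_ne (sub_nonneg.mpr (hFmle x)) (Ne.symm hJ)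
        have hd : (t - Fm x) / (F x - Fm x) ≤ 0 :=
          div_nonpos_of_nonpos_of_nonneg (by linarith [hFm0 x]) hJpos.le
        exact ENNReal.ofReal_eq_zero.mpr (le_trans (min_le_left _ _) hd)
    rw [lintegral_congr_ae hae]
    simp
  rcases le_or_gt 1 t with ht1 | ht1
  · -- t ≥ 1 : integral is 1
    rw [min_eq_right ht1]
    have hone : ∀ x, g x = 1 := by
      intro x
      simp only [hg]
      by_cases hJ : F x - Fm x = 0
      · rw [if_pos hJ, if_pos (le_trans (hF1 x) ht1)]
      · have hJpos : 0 < F x - Fm x := lt_of_le_of_ne (sub_nonneg.mpr (hFmle x)) (Ne.symm hJ)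
        rw [if_neg hJ]
        have hd : (1:ℝ) ≤ (t - Fm x) / (F x - Fm x) := by
          rw [le_div_iff₀ hJpos]
          have := hF1 x; linarith
        rw [min_eq_right hd]
        simp
    rw [lintegral_congr hone, lintegral_one, measure_univ, ENNReal.ofReal_one]
  · -- main case 0 < t < 1
    rw [min_eq_left ht1.le]
    set E : Set ℝ := {x | t < F x} with hE
    have hne : E.Nonempty := by
      have hu : (⋃ n : ℕ, Iic ((n:ℝ))) = univ := by
        refine eq_univ_of_forall fun x => ?_
        obtain ⟨n, hn⟩ := exists_nat_ge x
        exact mem_iUnion.mpr ⟨n, hn⟩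
      have h1 := tendsto_measure_iUnion_atTop (μ := μ) (s := fun n : ℕ => Iic ((n:ℝ)))
        (fun i j hij => Iic_subset_Iic.mpr (by exact_mod_cast hij))
      rw [hu, measure_univ] at h1
      have h2 : Tendsto (fun n : ℕ => F (n:ℝ)) atTop (nhds 1) := by
        have h3 := (ENNReal.tendsto_toReal (a := 1) (by simp)).comp h1
        simpa [Function.comp_def, hF] using h3
      obtain ⟨n, hn⟩ := (h2.eventually (eventually_gt_nhds ht1)).exists
      exact ⟨(n:ℝ), hn⟩
    have hbdd : BddBelow E := by
      have hi : (⋂ n : ℕ, Iic (-(n:ℝ))) = (∅ : Set ℝ) := by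
        refine eq_empty_iff_forall_notMem.mpr fun x hx => ?_
        obtain ⟨n, hn⟩ := exists_nat_ge (-x + 1)
        have := mem_iInter.mp hx n
        simp only [mem_Iic] at this
        linarith
      have h1 := tendsto_measure_iInter_atTop (μ := μ) (s := fun n : ℕ => Iic (-(n:ℝ)))
        (fun n => measurableSet_Iic.nullMeasurableSet)
        (fun i j hij => Iic_subset_Iic.mpr (by exact_mod_cast neg_le_neg (Nat.cast_le.mpr hij)))
        ⟨0, hfin _⟩
      rw [hi, measure_empty] at h1
      have h2 : Tendsto (fun n : ℕ => F (-(n:ℝ))) atTop (nhds 0) := by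
        have h3 := (ENNReal.tendsto_toReal (a := 0) (by simp)).comp h1
        simpa [Function.comp_def, hF] using h3
      obtain ⟨n, hn⟩ := (h2.eventually (eventually_lt_nhds ht0)).exists
      refine ⟨-(n:ℝ), fun y hy => ?_⟩
      by_contra hlt
      push_neg at hlt
      have : F y ≤ F (-(n:ℝ)) := hFmono _ _ hlt.le
      have : t < F (-(n:ℝ)) := lt_of_lt_of_le hy this
      linarith
    set q : ℝ := sInf E with hq
    have h_lt : ∀ x, x < q → F x ≤ t := by
      intro x hx
      by_contra hgt
      push_neg at hgt
      exact absurd (csInf_le hbdd hgt) (not_le.mpr hx)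
    have h_gt : ∀ y, q < y → t < F y := by
      intro y hy
      obtain ⟨z, hz, hzy⟩ := exists_lt_of_csInf_lt hne hy
      exact lt_of_lt_of_le hz (hFmono _ _ hzy.le)
    -- measure bounds at q
    have hIio : μ (Iio q) ≤ ENNReal.ofReal t := by
      have hu : (⋃ n : ℕ, Iic (q - 1/((n:ℝ)+1))) = Iio q := by
        ext y
        simp only [mem_iUnion, mem_Iic, mem_Iio]
        constructor
        · rintro ⟨n, hn⟩
          have : (0:ℝ) < 1/((n:ℝ)+1) := by positivity
          linarith
        · intro hy
          obtain ⟨n, hn⟩ := exists_nat_one_div_lt (sub_pos.mpr hy)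
          exact ⟨n, by push_cast at hn ⊢; linarith⟩
      have h1 := tendsto_measure_iUnion_atTop (μ := μ) (s := fun n : ℕ => Iic (q - 1/((n:ℝ)+1)))
        (fun i j hij => Iic_subset_Iic.mpr (by
          have : ((i:ℝ)+1) ≤ ((j:ℝ)+1) := by exact_mod_cast Nat.succ_le_succ hij
          have h0i : (0:ℝ) < (i:ℝ)+1 := by positivity
          have := one_div_le_one_div_of_le h0i this
          linarith))
      rw [hu] at h1
      refine le_of_tendsto h1 (Eventually.of_forall fun n => ?_)
      simp only [Function.comp_apply]
      have hlt : q - 1/((n:ℝ)+1) < q := by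
        have : (0:ℝ) < 1/((n:ℝ)+1) := by positivity
        linarith
      have := h_lt _ hlt
      rw [← ENNReal.ofReal_toReal (hfin (Iic (q - 1/((n:ℝ)+1))))]
      exact ENNReal.ofReal_le_ofReal this
    have hIic : ENNReal.ofReal t ≤ μ (Iic q) := by
      have hi : (⋂ n : ℕ, Iic (q + 1/((n:ℝ)+1))) = Iic q := by
        ext y
        simp only [mem_iInter, mem_Iic]
        constructor
        · intro hy
          by_contra hgt
          push_neg at hgt
          obtain ⟨n, hn⟩ := exists_nat_one_div_lt (sub_pos.mpr hgt)
          have := hy n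
          push_cast at hn this ⊢
          linarith
        · intro hy n
          have : (0:ℝ) < 1/((n:ℝ)+1) := by positivity
          linarith
      have h1 := tendsto_measure_iInter_atTop (μ := μ) (s := fun n : ℕ => Iic (q + 1/((n:ℝ)+1)))
        (fun n => measurableSet_Iic.nullMeasurableSet)
        (fun i j hij => Iic_subset_Iic.mpr (by
          have : ((i:ℝ)+1) ≤ ((j:ℝ)+1) := by exact_mod_cast Nat.succ_le_succ hij
          have h0i : (0:ℝ) < (i:ℝ)+1 := by positivity
          have := one_div_le_one_div_of_le h0i this
          linarith)) ⟨0, hfin _⟩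
      rw [hi] at h1
      refine ge_of_tendsto h1 (Eventually.of_forall fun n => ?_)
      simp only [Function.comp_apply]
      have hlt : q < q + 1/((n:ℝ)+1) := by
        have : (0:ℝ) < 1/((n:ℝ)+1) := by positivity
        linarith
      exact ENNReal.ofReal_le_of_le_toReal (h_gt _ hlt).le
    have hFmq : Fm q ≤ t := by
      have := ENNReal.toReal_mono (by simp) hIio
      simpa [hFm, ENNReal.toReal_ofReal ht0.le] using this
    have hFq : t ≤ F q := by
      have := ENNReal.toReal_mono (hfin _) hIic
      simpa [hF, ENNReal.toReal_ofReal ht0.le] using this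
    -- split the integral
    have hsplit : ∫⁻ x, g x ∂μ
        = (∫⁻ x in Iio q, g x ∂μ) + (∫⁻ x in {q}, g x ∂μ) + (∫⁻ x in Ioi q, g x ∂μ) := by
      rw [← setLIntegral_univ (μ := μ) g, ← Iic_union_Ioi (a := q),
        lintegral_union measurableSet_Ioi (Iic_disjoint_Ioi le_rfl),
        ← Iio_union_right (a := q),
        lintegral_union (measurableSet_singleton q)
          ((Set.disjoint_singleton_right (a := q) (s := Iio q)).mpr (by simp))]
    -- part 1
    have hpart1 : ∫⁻ x in Iio q, g x ∂μ = μ (Iio q) := by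
      have h1 : ∀ᵐ x ∂(μ.restrict (Iio q)), g x = 1 := by
        rw [ae_restrict_iff' measurableSet_Iio]
        refine Eventually.of_forall fun x hx => ?_
        have hFt : F x ≤ t := h_lt x hx
        simp only [hg]
        by_cases hJ : F x - Fm x = 0
        · rw [if_pos hJ, if_pos hFt]
        · have hJpos : 0 < F x - Fm x := lt_of_le_of_ne (sub_nonneg.mpr (hFmle x)) (Ne.symm hJ)
          rw [if_neg hJ]
          have hd : (1:ℝ) ≤ (t - Fm x) / (F x - Fm x) := by
            rw [le_div_iff₀ hJpos]; linarith
          rw [min_eq_right hd]; simp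
      rw [lintegral_congr_ae h1, lintegral_one, Measure.restrict_apply_univ]
    -- part 3
    have hpart3 : ∫⁻ x in Ioi q, g x ∂μ = 0 := by
      set T : Set ℝ := {x | q < x ∧ F x ≤ t} with hT
      have hTnull : μ T = 0 := by
        refine cover_zero μ fun x hx => ?_
        have hsub : T ∩ Iic x ⊆ Ioc q x := fun y hy => ⟨hy.1.1, hy.2⟩
        refine measure_mono_null hsub ?_
        have hIocx : Ioc q x = Iic x \ Iic q := by
          ext y; simp only [mem_Ioc, mem_diff, mem_Iic, not_le]; tauto
        rw [hIocx, measure_diff (Iic_subset_Iic.mpr hx.1.le) measurableSet_Iic.nullMeasurableSet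
          (hfin _)]
        have hle : μ (Iic x) ≤ μ (Iic q) := by
          rw [← ENNReal.ofReal_toReal (hfin (Iic x)), ← ENNReal.ofReal_toReal (hfin (Iic q))]
          exact ENNReal.ofReal_le_ofReal (le_trans hx.2 hFq)
        exact tsub_eq_zero_of_le hle
      have hae0 : ∀ᵐ x ∂(μ.restrict (Ioi q)), g x = 0 := by
        rw [ae_iff]
        rw [Measure.restrict_apply' measurableSet_Ioi]
        refine measure_mono_null ?_ hTnull
        rintro x ⟨hgx, hx⟩
        simp only [mem_setOf_eq] at hgx hx ⊢
        refine ⟨hx, ?_⟩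
        -- show F x ≤ t
        have hFmx : t ≤ Fm x := by
          have h2 : μ (Iic q) ≤ μ (Iio x) := measure_mono (Iic_subset_Iio.mpr hx)
          have := ENNReal.toReal_mono (hfin _) h2
          exact le_trans hFq (le_trans this (le_refl _))
        by_contra hFt
        push_neg at hFt
        apply hgx
        simp only [hg]
        by_cases hJ : F x - Fm x = 0
        · rw [if_pos hJ, if_neg (not_le.mpr hFt)]
        · rw [if_neg hJ]
          have hJpos : 0 < F x - Fm x := lt_of_le_of_ne (sub_nonneg.mpr (hFmle x)) (Ne.symm hJ)
          have hd : (t - Fm x) / (F x - Fm x) ≤ 0 :=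
            div_nonpos_of_nonpos_of_nonneg (by linarith) hJpos.le
          exact ENNReal.ofReal_eq_zero.mpr (le_trans (min_le_left _ _) hd)
      calc ∫⁻ x in Ioi q, g x ∂μ = ∫⁻ _ in Ioi q, 0 ∂μ := lintegral_congr_ae hae0
        _ = 0 := lintegral_zero
    -- part 2
    have hJq : μ (Iic q) = μ (Iio q) + μ {q} := by
      rw [← Iio_union_right (a := q),
        measure_union ((Set.disjoint_singleton_right (a := q) (s := Iio q)).mpr (by simp))
          (measurableSet_singleton q)]
    have hpart2 : ∫⁻ x in {q}, g x ∂μ = g q * μ {q} := lintegral_singleton g q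
    rw [hsplit, hpart1, hpart2, hpart3, add_zero]
    have hJreal : F q - Fm q = (μ {q}).toReal := by
      rw [hF, hFm]
      simp only
      rw [hJq, ENNReal.toReal_add (hfin _) (hfin _)]
      ring
    by_cases hq0 : μ {q} = 0
    · have hJ0 : F q - Fm q = 0 := by rw [hJreal, hq0]; simp
      rw [hq0, mul_zero, add_zero]
      have hqe : μ (Iic q) = μ (Iio q) := by rw [hJq, hq0, add_zero]
      refine le_antisymm hIio ?_
      rw [← hqe]
      exact hIic
    · have hJpos : 0 < F q - Fm q := by
        rw [hJreal]
        exact ENNReal.toReal_pos hq0 (hfin _)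
      have hgq : g q = ENNReal.ofReal ((t - Fm q) / (F q - Fm q)) := by
        simp only [hg]
        rw [if_neg (ne_of_gt hJpos)]
        congr 1
        rw [min_eq_left]
        rw [div_le_one hJpos]
        linarith
      rw [hgq]
      have hμq : μ {q} = ENNReal.ofReal (F q - Fm q) := by
        rw [hJreal, ENNReal.ofReal_toReal (hfin _)]
      have hμIio : μ (Iio q) = ENNReal.ofReal (Fm q) := by
        rw [hFm]
        simp only
        rw [ENNReal.ofReal_toReal (hfin _)]
      rw [hμq, hμIio, ← ENNReal.ofReal_mul (div_nonneg (by linarith) hJpos.le),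
        div_mul_cancel₀ _ (ne_of_gt hJpos), ← ENNReal.ofReal_add (hFm0 q) (by linarith)]
      congr 1
      ring

lemma meas_kernel_Iic {α : Type*} [MeasurableSpace α] (κ : Kernel α ℝ) [IsSFiniteKernel κ] :
    Measurable (fun p : α × ℝ => κ p.1 (Iic p.2)) := by
  have h := Kernel.measurable_kernel_prodMk_left
      (κ := κ.comap Prod.fst (measurable_fst : Measurable (Prod.fst : α × ℝ → α)))
      (t := {q : (α × ℝ) × ℝ | q.2 ≤ q.1.2})
      (measurableSet_le measurable_snd measurable_fst.snd)
  simp only [Kernel.comap_apply] at h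
  convert h using 2 with p
  rfl

lemma meas_kernel_Iio {α : Type*} [MeasurableSpace α] (κ : Kernel α ℝ) [IsSFiniteKernel κ] :
    Measurable (fun p : α × ℝ => κ p.1 (Iio p.2)) := by
  have h := Kernel.measurable_kernel_prodMk_left
      (κ := κ.comap Prod.fst (measurable_fst : Measurable (Prod.fst : α × ℝ → α)))
      (t := {q : (α × ℝ) × ℝ | q.2 < q.1.2})
      (measurableSet_lt measurable_snd measurable_fst.snd)
  simp only [Kernel.comap_apply] at h
  convert h using 2 with p
  rfl

lemma key_aux {Ω α : Type*} [MeasurableSpace Ω] [MeasurableSpace α]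
    (P : Measure Ω) [IsProbabilityMeasure P]
    (Z : Ω → α) (X V : Ω → ℝ) (hZ : Measurable Z) (hX : Measurable X) (hV : Measurable V)
    (κ : Kernel α ℝ) [IsMarkovKernel κ]
    (hrect : ∀ A : Set α, ∀ B : Set ℝ, MeasurableSet A → MeasurableSet B →
      P (Z ⁻¹' A ∩ X ⁻¹' B) = ∫⁻ ω in Z ⁻¹' A, κ (Z ω) B ∂P)
    (hVunif : Measure.map V P = volume.restrict (Ioo (0 : ℝ) 1))
    (hindep : IndepFun (fun ω => (Z ω, X ω)) V P)
    (t : ℝ) (A : Set α) (hA : MeasurableSet A) :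
    P ({ω | (κ (Z ω) (Iic (X ω))).toReal
        - (1 - V ω) * ((κ (Z ω) (Iic (X ω))).toReal - (κ (Z ω) (Iio (X ω))).toReal) ≤ t}
        ∩ Z ⁻¹' A)
      = volume.restrict (Ioo (0:ℝ) 1) (Iic t) * P (Z ⁻¹' A) := by
  set ν := volume.restrict (Ioo (0:ℝ) 1) with hν
  haveI : IsProbabilityMeasure (Measure.map Z P) := Measure.isProbabilityMeasure_map hZ.aemeasurable
  have hY : Measurable (fun ω => (Z ω, X ω)) := hZ.prodMk hX
  -- Step B : the joint law of (Z, X) is the compProd of the law of Z with κ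
  have hμeq : Measure.map (fun ω => (Z ω, X ω)) P = (Measure.map Z P) ⊗ₘ κ := by
    haveI : IsFiniteMeasure ((Measure.map Z P) ⊗ₘ κ) := by
      constructor
      rw [Measure.compProd_apply_univ]
      exact measure_lt_top _ _
    refine ext_of_generate_finite _ generateFrom_prod.symm isPiSystem_prod ?_ ?_
    · rintro s ⟨A', hA', B', hB', rfl⟩
      simp only [mem_setOf_eq] at hA' hB'
      rw [Measure.map_apply hY (hA'.prod hB'), Measure.compProd_apply_prod hA' hB',
        Set.mk_preimage_prod, hrect A' B' hA' hB',
        setLIntegral_map hA' (κ.measurable_coe hB') hZ]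
    · rw [Measure.map_apply hY MeasurableSet.univ]
      simp [Measure.compProd_apply_univ]
  -- Step A : independence gives the product structure with V
  have hmap : Measure.map (fun ω => ((Z ω, X ω), V ω)) P
      = (Measure.map (fun ω => (Z ω, X ω)) P).prod ν := by
    rw [← hVunif]
    exact (indepFun_iff_map_prod_eq_prod_map_map hY.aemeasurable hV.aemeasurable).mp hindep
  -- the target set
  set S : Set ((α × ℝ) × ℝ) := {p | (κ p.1.1 (Iic p.1.2)).toReal
      - (1 - p.2) * ((κ p.1.1 (Iic p.1.2)).toReal - (κ p.1.1 (Iio p.1.2)).toReal) ≤ t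
      ∧ p.1.1 ∈ A} with hS
  have hf1 : Measurable (fun p : α × ℝ => (κ p.1 (Iic p.2)).toReal) :=
    (meas_kernel_Iic κ).ennreal_toReal
  have hf0 : Measurable (fun p : α × ℝ => (κ p.1 (Iio p.2)).toReal) :=
    (meas_kernel_Iio κ).ennreal_toReal
  have hc : Measurable (fun p : (α × ℝ) × ℝ => (κ p.1.1 (Iic p.1.2)).toReal
      - (1 - p.2) * ((κ p.1.1 (Iic p.1.2)).toReal - (κ p.1.1 (Iio p.1.2)).toReal)) :=
    (hf1.comp measurable_fst).sub ((measurable_const.sub measurable_snd).mul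
      ((hf1.comp measurable_fst).sub (hf0.comp measurable_fst)))
  have hSmeas : MeasurableSet S :=
    (measurableSet_le hc measurable_const).inter ((measurable_fst.fst) hA)
  have hpre : (fun ω => ((Z ω, X ω), V ω)) ⁻¹' S
      = {ω | (κ (Z ω) (Iic (X ω))).toReal
        - (1 - V ω) * ((κ (Z ω) (Iic (X ω))).toReal - (κ (Z ω) (Iio (X ω))).toReal) ≤ t}
        ∩ Z ⁻¹' A := rfl
  rw [← hpre, ← Measure.map_apply (hY.prodMk hV) hSmeas, hmap, hμeq,
    Measure.prod_apply hSmeas]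
  -- compute the iterated integral
  have hmeas_sec : Measurable (fun p : α × ℝ => ν (Prod.mk p ⁻¹' S)) :=
    measurable_measure_prodMk_left hSmeas
  rw [Measure.lintegral_compProd hmeas_sec]
  have hinner : ∀ a : α, ∫⁻ x, ν (Prod.mk (a, x) ⁻¹' S) ∂κ a
      = A.indicator (fun _ => ν (Iic t)) a := by
    intro a
    by_cases ha : a ∈ A
    · rw [indicator_of_mem ha]
      have hsec : ∀ x : ℝ, Prod.mk (a, x) ⁻¹' S
          = {v : ℝ | ((κ a) (Iic x)).toReal
            - (1 - v) * (((κ a) (Iic x)).toReal - ((κ a) (Iio x)).toReal) ≤ t} := by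
        intro x
        ext v
        simp only [hS, mem_preimage, mem_setOf_eq, ha, and_true]
      calc ∫⁻ x, ν (Prod.mk (a, x) ⁻¹' S) ∂κ a
          = ∫⁻ x, ν {v : ℝ | ((κ a) (Iic x)).toReal
            - (1 - v) * (((κ a) (Iic x)).toReal - ((κ a) (Iio x)).toReal) ≤ t} ∂κ a :=
            lintegral_congr fun x => by rw [hsec x]
        _ = ν (Iic t) := pit_pointwise (κ a) t
    · rw [indicator_of_notMem ha]
      have hsec : ∀ x : ℝ, Prod.mk (a, x) ⁻¹' S = (∅ : Set ℝ) := by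
        intro x
        ext v
        simp only [hS, mem_preimage, mem_setOf_eq, ha, and_false, mem_empty_iff_false]
      calc ∫⁻ x, ν (Prod.mk (a, x) ⁻¹' S) ∂κ a
          = ∫⁻ _, 0 ∂κ a := lintegral_congr fun x => by rw [hsec x]; simp
        _ = 0 := lintegral_zero
  calc ∫⁻ a, ∫⁻ x, ν (Prod.mk (a, x) ⁻¹' S) ∂κ a ∂(Measure.map Z P)
      = ∫⁻ a, A.indicator (fun _ => ν (Iic t)) a ∂(Measure.map Z P) :=
        lintegral_congr hinner
    _ = ν (Iic t) * (Measure.map Z P) A := lintegral_indicator_const hA _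
    _ = ν (Iic t) * P (Z ⁻¹' A) := by rw [Measure.map_apply hZ hA]

/-- **Conditional generalized probability integral transform.**
Let `𝒢` be a sub-σ-algebra, `κ` a regular conditional distribution of `X` given `𝒢`,
`F (x|ω)` the conditional CDF, `Fm` its left limit in `x`, `J := F - Fm` the jump.
If `V` is uniform on `(0,1)` and independent of `σ(𝒢, X)`, then
`W ω := F (X ω | ω) - (1 - V ω) * J (X ω | ω)` is uniform on `(0,1)`
and `W` is independent of `𝒢`. -/
theorem conditional_generalized_PIT
    {Ω : Type*} (𝒢 : MeasurableSpace Ω) [mΩ : MeasurableSpace Ω]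
    (P : Measure Ω) [IsProbabilityMeasure P] (h𝒢 : 𝒢 ≤ mΩ)
    (X V : Ω → ℝ) (hX : Measurable X) (hV : Measurable V)
    -- κ is a regular conditional distribution of X given 𝒢:
    (κ : Ω → Measure ℝ)
    (hκprob : ∀ ω, IsProbabilityMeasure (κ ω))
    (hκmeas : ∀ B : Set ℝ, MeasurableSet B → Measurable[𝒢] fun ω => κ ω B)
    (hκcond : ∀ B : Set ℝ, MeasurableSet B →
      (fun ω => (κ ω B).toReal)
        =ᵐ[P] P[(X ⁻¹' B).indicator (fun _ => (1 : ℝ)) | 𝒢])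
    -- conditional CDF, its left limit, and jump function:
    (F Fm J : ℝ → Ω → ℝ)
    (hF : ∀ x ω, F x ω = (κ ω (Set.Iic x)).toReal)
    (hFm : ∀ x ω, Tendsto (fun y => F y ω) (nhdsWithin x (Set.Iio x)) (nhds (Fm x ω)))
    (hJ : ∀ x ω, J x ω = F x ω - Fm x ω)
    -- V is uniform on (0,1) and independent of the σ-algebra generated by 𝒢 and X:
    (hVunif : Measure.map V P = volume.restrict (Set.Ioo (0 : ℝ) 1))
    (hindep : Indep (MeasurableSpace.comap V inferInstance)
      (𝒢 ⊔ MeasurableSpace.comap X inferInstance) P)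
    (W : Ω → ℝ) (hW : ∀ ω, W ω = F (X ω) ω - (1 - V ω) * J (X ω) ω) :
    Measure.map W P = volume.restrict (Set.Ioo (0 : ℝ) 1) ∧
      Indep (MeasurableSpace.comap W inferInstance) 𝒢 P := by
  set ν := volume.restrict (Set.Ioo (0 : ℝ) 1) with hνdef
  -- the kernel
  have hκm : @Measurable Ω (Measure ℝ) 𝒢 _ κ :=
    @Measure.measurable_of_measurable_coe ℝ Ω _ 𝒢 κ (fun s hs => hκmeas s hs)
  let η : @Kernel Ω ℝ 𝒢 _ := @Kernel.mk Ω ℝ 𝒢 _ κ hκm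
  have hηapp : ∀ ω, η ω = κ ω := fun ω => rfl
  haveI hMarkov : @IsMarkovKernel Ω ℝ 𝒢 _ η := by
    constructor
    intro a
    rw [hηapp]
    exact hκprob a
  -- left limits identified
  have hFm' : ∀ x ω, Fm x ω = (κ ω (Iio x)).toReal := by
    intro x ω
    haveI := hκprob ω
    have hseq : Tendsto (fun n : ℕ => x - 1/((n:ℝ)+1)) atTop (nhdsWithin x (Iio x)) := by
      refine tendsto_nhdsWithin_of_tendsto_nhds_of_eventually_within _ ?_ ?_
      · have h0 : Tendsto (fun n : ℕ => 1/((n:ℝ)+1)) atTop (nhds 0) :=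
          tendsto_one_div_add_atTop_nhds_zero_nat
        have := (tendsto_const_nhds (x := x) (f := atTop (α := ℕ))).sub h0
        simpa using this
      · refine Eventually.of_forall fun n => ?_
        simp only [mem_Iio]
        have : (0:ℝ) < 1/((n:ℝ)+1) := by positivity
        linarith
    have h1 := (hFm x ω).comp hseq
    have hu : (⋃ n : ℕ, Iic (x - 1/((n:ℝ)+1))) = Iio x := by
      ext y
      simp only [mem_iUnion, mem_Iic, mem_Iio]
      constructor
      · rintro ⟨n, hn⟩
        have : (0:ℝ) < 1/((n:ℝ)+1) := by positivity
        linarith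
      · intro hy
        obtain ⟨n, hn⟩ := exists_nat_one_div_lt (sub_pos.mpr hy)
        exact ⟨n, by push_cast at hn ⊢; linarith⟩
    have h2 := tendsto_measure_iUnion_atTop (μ := κ ω)
      (s := fun n : ℕ => Iic (x - 1/((n:ℝ)+1)))
      (fun i j hij => Iic_subset_Iic.mpr (by
        have : ((i:ℝ)+1) ≤ ((j:ℝ)+1) := by exact_mod_cast Nat.succ_le_succ hij
        have h0i : (0:ℝ) < (i:ℝ)+1 := by positivity
        have := one_div_le_one_div_of_le h0i this
        linarith))
    rw [hu] at h2
    have h3 := (ENNReal.tendsto_toReal (measure_ne_top (κ ω) (Iio x))).comp h2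
    have h1' : Tendsto (fun n : ℕ => (κ ω (Iic (x - 1/((n:ℝ)+1)))).toReal) atTop
        (nhds (Fm x ω)) := by
      have he : (fun n : ℕ => (κ ω (Iic (x - 1/((n:ℝ)+1)))).toReal)
          = ((fun y => F y ω) ∘ fun n : ℕ => x - 1/((n:ℝ)+1)) := by
        funext n; simp only [Function.comp_apply, hF]
      rw [he]; exact h1
    have h3' : Tendsto (fun n : ℕ => (κ ω (Iic (x - 1/((n:ℝ)+1)))).toReal) atTop
        (nhds ((κ ω (Iio x)).toReal)) := h3
    exact tendsto_nhds_unique h1' h3'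
  -- pair measurability into the 𝒢-product
  have hpairm' : @Measurable Ω (Ω × ℝ) mΩ (@Prod.instMeasurableSpace Ω ℝ 𝒢 _)
      (fun ω => (ω, X ω)) := by
    exact Measurable.prodMk (measurable_id'' h𝒢) hX
  -- W expressed through the kernel
  have hWeq : ∀ ω, W ω = (κ ω (Iic (X ω))).toReal
      - (1 - V ω) * ((κ ω (Iic (X ω))).toReal - (κ ω (Iio (X ω))).toReal) := by
    intro ω
    rw [hW, hJ, hF, hFm']
  have hWm : Measurable W := by
    haveI hsf : @IsSFiniteKernel Ω ℝ 𝒢 _ η := by infer_instance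
    have h1 : Measurable fun ω => (κ ω (Iic (X ω))).toReal := by
      exact ((@meas_kernel_Iic Ω 𝒢 η hsf).ennreal_toReal).comp hpairm'
    have h0 : Measurable fun ω => (κ ω (Iio (X ω))).toReal := by
      exact ((@meas_kernel_Iio Ω 𝒢 η hsf).ennreal_toReal).comp hpairm'
    have : W = fun ω => (κ ω (Iic (X ω))).toReal
        - (1 - V ω) * ((κ ω (Iic (X ω))).toReal - (κ ω (Iio (X ω))).toReal) := funext hWeq
    rw [this]
    exact h1.sub ((measurable_const.sub hV).mul (h1.sub h0))
  -- rectangle property from the conditional expectation hypothesis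
  haveI : SigmaFinite (P.trim h𝒢) := by infer_instance
  have hrect : ∀ (A : Set Ω) (B : Set ℝ), MeasurableSet[𝒢] A → MeasurableSet B →
      P (id ⁻¹' A ∩ X ⁻¹' B) = ∫⁻ ω in id ⁻¹' A, η (id ω) B ∂P := by
    intro A B hA hB
    have hIA : id ⁻¹' A = A := rfl
    rw [hIA]
    have hκB1 : ∀ ω, κ ω B ≤ 1 := fun ω => by
      haveI := hκprob ω
      exact prob_le_one
    have hfin1 : P (A ∩ X ⁻¹' B) ≠ ⊤ := measure_ne_top _ _
    have hfin2 : (∫⁻ ω in A, κ ω B ∂P) ≠ ⊤ := by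
      refine ne_top_of_le_ne_top (measure_ne_top (P.restrict A) univ) ?_
      calc ∫⁻ ω in A, κ ω B ∂P ≤ ∫⁻ _ in A, 1 ∂P := lintegral_mono hκB1
        _ = P.restrict A univ := by rw [lintegral_one]
    have hInd : Integrable ((X ⁻¹' B).indicator (fun _ => (1:ℝ))) P :=
      (integrable_const (1:ℝ)).indicator (hX hB)
    have hmeasκB : Measurable fun ω => κ ω B := (hκmeas B hB).mono h𝒢 le_rfl
    have htr : (∫⁻ ω in A, κ ω B ∂P).toReal = (P (A ∩ X ⁻¹' B)).toReal := by
      have e1 : (∫⁻ ω in A, κ ω B ∂P).toReal = ∫ ω in A, (κ ω B).toReal ∂P := by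
        rw [← integral_toReal hmeasκB.aemeasurable.restrict]
        exact ae_of_all _ fun ω => lt_of_le_of_lt (hκB1 ω) ENNReal.one_lt_top
      have e2 : ∫ ω in A, (κ ω B).toReal ∂P
          = ∫ ω in A, (P[(X ⁻¹' B).indicator (fun _ => (1:ℝ)) | 𝒢]) ω ∂P :=
        integral_congr_ae (ae_restrict_of_ae (hκcond B hB))
      have e3 : ∫ ω in A, (P[(X ⁻¹' B).indicator (fun _ => (1:ℝ)) | 𝒢]) ω ∂P
          = ∫ ω in A, (X ⁻¹' B).indicator (fun _ => (1:ℝ)) ω ∂P :=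
        setIntegral_condExp h𝒢 hInd hA
      have e4 : ∫ ω in A, (X ⁻¹' B).indicator (fun _ => (1:ℝ)) ω ∂P
          = (P (A ∩ X ⁻¹' B)).toReal := by
        rw [setIntegral_indicator (hX hB), setIntegral_const]
        simp
        rfl
      rw [e1, e2, e3, e4]
    have := (ENNReal.toReal_eq_toReal_iff' hfin2 hfin1).mp htr
    rw [← this]
    rfl
  -- independence of the pair (id, X) from V
  have hindep2 : @IndepFun Ω (Ω × ℝ) ℝ mΩ (@Prod.instMeasurableSpace Ω ℝ 𝒢 _) _
      (fun ω => (ω, X ω)) V P := by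
    rw [@IndepFun_iff_Indep Ω (Ω × ℝ) ℝ mΩ (@Prod.instMeasurableSpace Ω ℝ 𝒢 _) _ _ _ P,
      @Indep_iff Ω _ _ mΩ P]
    intro t1 t2 h1 h2
    have hpairmG : @Measurable Ω (Ω × ℝ) (𝒢 ⊔ MeasurableSpace.comap X inferInstance)
        (@Prod.instMeasurableSpace Ω ℝ 𝒢 _) (fun ω => (ω, X ω)) := by
      refine Measurable.prodMk ?_ ?_
      · exact measurable_id'' le_sup_left
      · exact Measurable.of_comap_le le_sup_right
    have hle := Measurable.comap_le hpairmG
    exact (Indep_iff _ _ _).mp hindep.symm t1 t2 (hle _ h1) h2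
  -- the key identity
  have key : ∀ (t : ℝ) (G : Set Ω), MeasurableSet[𝒢] G →
      P ({ω | W ω ≤ t} ∩ G) = ν (Iic t) * P G := by
    intro t G hG
    have h := @key_aux Ω Ω mΩ 𝒢 P _ id X V (measurable_id'' h𝒢) hX hV η hMarkov
      hrect hVunif hindep2 t G hG
    have hset : {ω | (η (id ω) (Iic (X ω))).toReal
        - (1 - V ω) * ((η (id ω) (Iic (X ω))).toReal - (η (id ω) (Iio (X ω))).toReal) ≤ t}
        = {ω | W ω ≤ t} := by
      ext ω
      simp only [mem_setOf_eq, hηapp, id_eq]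
      rw [hWeq ω]
    rw [hset] at h
    exact h
  constructor
  · haveI : IsProbabilityMeasure (Measure.map W P) := Measure.isProbabilityMeasure_map hWm.aemeasurable
    refine Measure.ext_of_Iic (Measure.map W P) _ fun a => ?_
    rw [Measure.map_apply hWm measurableSet_Iic]
    have h := key a univ MeasurableSet.univ
    rw [inter_univ, measure_univ, mul_one] at h
    exact h
  · set p1 : Set (Set Ω) := (preimage W) '' (range Iic) with hp1def
    set p2 : Set (Set Ω) := {s | MeasurableSet[𝒢] s} with hp2def
    have hPW : ∀ a : ℝ, P (W ⁻¹' Iic a) = ν (Iic a) := by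
      intro a
      have h := key a univ MeasurableSet.univ
      rw [inter_univ, measure_univ, mul_one] at h
      exact h
    refine IndepSets.indep (p1 := p1) (p2 := p2) (Measurable.comap_le hWm) h𝒢 ?_ ?_ ?_ ?_ ?_
    · rintro _ ⟨_, ⟨a, rfl⟩, rfl⟩ _ ⟨_, ⟨b, rfl⟩, rfl⟩ _
      refine ⟨Iic (min a b), mem_range_self _, ?_⟩
      rw [← preimage_inter, Iic_inter_Iic]
    · intro s hs t ht _
      exact hs.inter ht
    · rw [show (inferInstance : MeasurableSpace ℝ) = borel ℝ from BorelSpace.measurable_eq,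
        borel_eq_generateFrom_Iic ℝ, MeasurableSpace.comap_generateFrom]
    · exact (@MeasurableSpace.generateFrom_measurableSet Ω 𝒢).symm
    · rw [IndepSets_iff]
      rintro _ t2 ⟨_, ⟨a, rfl⟩, rfl⟩ h2
      have h1 : P (W ⁻¹' Iic a ∩ t2) = ν (Iic a) * P t2 := key a t2 h2
      rw [h1, hPW a]
end

section
/- Let X be an integer-valued random variable with CDF F, let V be uniformly distributed on (0,1) and independent of X, and set Z := X − V. Let G be the CDF of Z. Then G is a continuous function, and for every real z, G(z) = F(⌊z⌋) + (z − ⌊z⌋)·(F(⌊z⌋ + 1) − F(⌊z⌋)); that is, G is the piecewise-linear interpolation of F between consecutive integers. -/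
open MeasureTheory ProbabilityTheory Filter Set
open Topology

/-- **Smoothing an integer-valued random variable.**
Let `X` be an integer-valued random variable with CDF `F`, let `V` be uniform on `(0,1)`
and independent of `X`, and set `Z := X - V` with CDF `G`.  Then `G` is continuous and
is the piecewise-linear interpolation of `F` between consecutive integers:
`G z = F ⌊z⌋ + (z - ⌊z⌋) * (F (⌊z⌋ + 1) - F ⌊z⌋)`. -/
theorem cdf_of_smoothed_integer_rv
    {Ω : Type*} [MeasurableSpace Ω] (P : Measure Ω) [IsProbabilityMeasure P]
    (X : Ω → ℤ) (V : Ω → ℝ) (hX : Measurable X) (hV : Measurable V)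
    (hVunif : Measure.map V P = volume.restrict (Set.Ioo (0 : ℝ) 1))
    (hindep : IndepFun X V P)
    (Z : Ω → ℝ) (hZ : ∀ ω, Z ω = (X ω : ℝ) - V ω)
    (F G : ℝ → ℝ)
    (hF : ∀ x, F x = (P {ω | (X ω : ℝ) ≤ x}).toReal)
    (hG : ∀ z, G z = (P {ω | Z ω ≤ z}).toReal) :
    Continuous G ∧
      ∀ z : ℝ, G z = F (⌊z⌋ : ℝ)
        + (z - (⌊z⌋ : ℝ)) * (F ((⌊z⌋ : ℝ) + 1) - F (⌊z⌋ : ℝ)) := by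
  -- `V ∈ (0,1)` almost surely
  have hD : P (V ⁻¹' Ioo (0:ℝ) 1) = 1 := by
    rw [← Measure.map_apply hV measurableSet_Ioo, hVunif,
      Measure.restrict_apply measurableSet_Ioo, inter_self, Real.volume_Ioo]
    norm_num
  have hDc : P (V ⁻¹' Ioo (0:ℝ) 1)ᶜ = 0 := by
    rw [measure_compl (hV measurableSet_Ioo) (measure_ne_top _ _), hD, measure_univ]
    simp
  -- the key formula
  have key : ∀ z : ℝ, G z = F (⌊z⌋ : ℝ)
      + (z - (⌊z⌋ : ℝ)) * (F ((⌊z⌋ : ℝ) + 1) - F (⌊z⌋ : ℝ)) := by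
    intro z
    set n : ℤ := ⌊z⌋ with hn
    have hnz : (n : ℝ) ≤ z := Int.floor_le z
    have hzn : z < (n : ℝ) + 1 := Int.lt_floor_add_one z
    set θ : ℝ := z - n with hθ
    have hθ0 : 0 ≤ θ := by simp [hθ]; linarith
    have hθ1 : θ < 1 := by simp [hθ]; linarith
    set A : Set Ω := X ⁻¹' Iic n with hA
    set B : Set Ω := X ⁻¹' {n + 1} with hB
    set C : Set Ω := V ⁻¹' Ico (1 - θ) 1 with hC
    set D : Set Ω := V ⁻¹' Ioo (0:ℝ) 1 with hDdef
    have hAm : MeasurableSet A := hX (measurableSet_Iic)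
    have hBm : MeasurableSet B := hX (measurableSet_singleton _)
    have hCm : MeasurableSet C := hV measurableSet_Ico
    have hDm : MeasurableSet D := hV measurableSet_Ioo
    -- the event decomposition on `{V ∈ (0,1)}`
    have hset : {ω | Z ω ≤ z} ∩ D = (A ∩ D) ∪ (B ∩ C) := by
      ext ω
      simp only [mem_inter_iff, mem_union, mem_setOf_eq, mem_preimage, mem_Iic, mem_Ioo,
        mem_Ico, mem_singleton_iff, hZ, hA, hB, hC, hDdef]
      constructor
      · rintro ⟨hle, h0, h1⟩
        by_cases hx : X ω ≤ n
        · exact Or.inl ⟨hx, h0, h1⟩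
        · right
          have hcast : ((n : ℝ) + 1) ≤ (X ω : ℝ) := by
            have : (n + 1 : ℤ) ≤ X ω := by omega
            exact_mod_cast this
          have hx2 : (X ω : ℝ) < (n : ℝ) + 2 := by linarith
          have hx2' : X ω < n + 2 := by exact_mod_cast hx2
          have hx1 : X ω = n + 1 := by omega
          refine ⟨hx1, ⟨?_, h1⟩⟩
          have : ((n : ℝ) + 1) - V ω ≤ z := by
            have := hle
            rw [hx1] at this
            push_cast at this
            linarith
          simp only [hθ]
          linarith
      · rintro (⟨hx, h0, h1⟩ | ⟨hx, hv0, hv1⟩)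
        · have : (X ω : ℝ) ≤ (n : ℝ) := by exact_mod_cast hx
          exact ⟨by linarith, h0, h1⟩
        · have hxr : (X ω : ℝ) = (n : ℝ) + 1 := by exact_mod_cast hx
          have hv0' : 1 - θ ≤ V ω := hv0
          refine ⟨by rw [hxr]; simp only [hθ] at hv0' ⊢; linarith, by linarith, hv1⟩
    -- disjointness
    have hdisj : Disjoint (A ∩ D) (B ∩ C) := by
      rw [Set.disjoint_left]
      rintro ω ⟨hωA, -⟩ ⟨hωB, -⟩
      simp only [hA, hB, mem_preimage, mem_Iic, mem_singleton_iff] at hωA hωB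
      omega
    -- measure computation
    have h1 : P {ω | Z ω ≤ z} = P (A ∩ D) + P (B ∩ C) := by
      rw [← measure_inter_conull hDc, hset,
        measure_union hdisj (hBm.inter hCm)]
    have h2 : P (A ∩ D) = P A := measure_inter_conull hDc
    have hPC : P C = ENNReal.ofReal θ := by
      rw [hC, ← Measure.map_apply hV measurableSet_Ico, hVunif,
        Measure.restrict_apply measurableSet_Ico]
      have : Ico (1 - θ) 1 ∩ Ioo (0:ℝ) 1 = Ico (1 - θ) 1 := by
        apply inter_eq_left.mpr
        intro x hx
        exact ⟨lt_of_lt_of_le (by linarith) hx.1, hx.2⟩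
      rw [this, Real.volume_Ico]
      norm_num
    have h3 : P (B ∩ C) = P B * ENNReal.ofReal θ := by
      rw [hA, hB, hC] at *
      rw [hindep.measure_inter_preimage_eq_mul _ _ (measurableSet_singleton _)
        measurableSet_Ico, hPC]
    -- identify F values
    have hFn : F (n : ℝ) = (P A).toReal := by
      rw [hF]
      congr 1
      congr 1
      ext ω; simp [hA, Int.cast_le]
    have hsplit : P (X ⁻¹' Iic (n + 1)) = P A + P B := by
      have hdisj2 : Disjoint A B := by
        rw [Set.disjoint_left]
        intro ω hω1 hω2
        simp only [hA, hB, mem_preimage, mem_Iic, mem_singleton_iff] at hω1 hω2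
        omega
      have hun : X ⁻¹' Iic (n + 1) = A ∪ B := by
        ext ω
        simp only [hA, hB, mem_union, mem_preimage, mem_Iic, mem_singleton_iff]
        omega
      rw [hun, measure_union hdisj2 hBm]
    have hFn1 : F ((n : ℝ) + 1) = (P A).toReal + (P B).toReal := by
      rw [hF, ← ENNReal.toReal_add (measure_ne_top _ _) (measure_ne_top _ _), ← hsplit]
      congr 1
      congr 1
      ext ω
      simp only [mem_setOf_eq, mem_preimage, mem_Iic]
      constructor
      · intro h; exact_mod_cast (by linarith : (X ω : ℝ) ≤ (n:ℝ) + 1)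
      · intro h
        have : (X ω : ℝ) ≤ ((n + 1 : ℤ) : ℝ) := by exact_mod_cast h
        push_cast at this; linarith
    have hGz : G z = (P A).toReal + (P B).toReal * θ := by
      rw [hG, h1, h2, h3, ENNReal.toReal_add (measure_ne_top _ _)
        (by exact ENNReal.mul_ne_top (measure_ne_top _ _) ENNReal.ofReal_ne_top),
        ENNReal.toReal_mul, ENNReal.toReal_ofReal hθ0]
    rw [hGz, hFn, hFn1]
    ring
  refine ⟨?_, key⟩
  -- continuity
  rw [continuous_iff_continuousAt]
  intro z₀
  by_cases hz : (⌊z₀⌋ : ℝ) = z₀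
  · -- integer case
    set m : ℤ := ⌊z₀⌋ with hm
    have hGz₀ : G z₀ = F (m : ℝ) := by
      rw [key z₀, ← hm, ← hz]
      ring
    rw [continuousAt_iff_continuous_left'_right']
    constructor
    · -- from the left
      have hev : ∀ᶠ w in 𝓝[<] z₀,
          G w = F ((m:ℝ) - 1) + (w - ((m:ℝ) - 1)) * (F (m:ℝ) - F ((m:ℝ) - 1)) := by
        filter_upwards [Ioo_mem_nhdsLT_of_mem (⟨by linarith, le_refl z₀⟩ :
            z₀ ∈ Ioc (z₀ - 1) z₀)] with w hw
        have hfl : ⌊w⌋ = m - 1 := by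
          rw [Int.floor_eq_iff]
          constructor
          · push_cast; rw [hz] at *; linarith [hw.1]
          · push_cast; rw [hz] at *; linarith [hw.2]
        rw [key w, hfl]
        push_cast
        rw [show (m:ℝ) - 1 + 1 = (m:ℝ) by ring]
      have hten : Tendsto (fun w => F ((m:ℝ) - 1) + (w - ((m:ℝ) - 1)) *
          (F (m:ℝ) - F ((m:ℝ) - 1))) (𝓝[<] z₀) (𝓝 (G z₀)) := by
        have hc : Continuous (fun w : ℝ => F ((m:ℝ) - 1) + (w - ((m:ℝ) - 1)) *
            (F (m:ℝ) - F ((m:ℝ) - 1))) := by continuity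
        have h2 : G z₀ = F ((m:ℝ) - 1) + (z₀ - ((m:ℝ) - 1)) * (F (m:ℝ) - F ((m:ℝ) - 1)) := by
          rw [hGz₀, ← hz]; ring
        rw [h2]
        exact (hc.tendsto z₀).mono_left nhdsWithin_le_nhds
      exact hten.congr' (hev.mono fun w hw => hw.symm)
    · -- from the right
      have hev : ∀ᶠ w in 𝓝[>] z₀,
          G w = F (m:ℝ) + (w - (m:ℝ)) * (F ((m:ℝ) + 1) - F (m:ℝ)) := by
        filter_upwards [Ioo_mem_nhdsGT_of_mem (⟨le_refl z₀, by linarith⟩ :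
            z₀ ∈ Ico z₀ (z₀ + 1))] with w hw
        have hfl : ⌊w⌋ = m := by
          rw [Int.floor_eq_iff]
          constructor
          · rw [hz]; linarith [hw.1]
          · rw [hz]; linarith [hw.2]
        rw [key w, hfl]
      have hten : Tendsto (fun w => F (m:ℝ) + (w - (m:ℝ)) *
          (F ((m:ℝ) + 1) - F (m:ℝ))) (𝓝[>] z₀) (𝓝 (G z₀)) := by
        have hc : Continuous (fun w : ℝ => F (m:ℝ) + (w - (m:ℝ)) *
            (F ((m:ℝ) + 1) - F (m:ℝ))) := by continuity
        have h2 : G z₀ = F (m:ℝ) + (z₀ - (m:ℝ)) * (F ((m:ℝ) + 1) - F (m:ℝ)) := by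
          rw [hGz₀, ← hz]; ring
        rw [h2]
        exact (hc.tendsto z₀).mono_left nhdsWithin_le_nhds
      exact hten.congr' (hev.mono fun w hw => hw.symm)
  · -- non-integer case: the floor is locally constant
    have h1 : (⌊z₀⌋ : ℝ) < z₀ := lt_of_le_of_ne (Int.floor_le z₀) hz
    have hev : ∀ᶠ w in 𝓝 z₀,
        G w = F ((⌊z₀⌋:ℝ)) + (w - (⌊z₀⌋:ℝ)) * (F ((⌊z₀⌋:ℝ) + 1) - F ((⌊z₀⌋:ℝ))) := by
      filter_upwards [Ioo_mem_nhds h1 (Int.lt_floor_add_one z₀)] with w hw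
      have hfl : ⌊w⌋ = ⌊z₀⌋ := by
        rw [Int.floor_eq_iff]
        exact ⟨hw.1.le, hw.2⟩
      rw [key w, hfl]
    have hc : Continuous (fun w : ℝ => F ((⌊z₀⌋:ℝ)) + (w - (⌊z₀⌋:ℝ)) *
        (F ((⌊z₀⌋:ℝ) + 1) - F ((⌊z₀⌋:ℝ)))) := by continuity
    exact hc.continuousAt.congr (hev.mono fun w hw => hw.symm)
end

section
/- Let Φ denote the standard normal CDF and φ its density, and for m ∈ ℝ and s > 0 let φ_{m,s} denote the density of the normal distribution with mean m and standard deviation s. Let F̂ : ℝ → (0,1) be a strictly increasing, continuously differentiable bijection onto (0,1) with everywhere positive derivative f̂. Let p be normally distributed with mean μ and standard deviation σ > 0, and for constants τ_mean ∈ ℝ and τ_sd > 0 define T := F̂⁻¹(Φ(τ_sd·p + τ_mean)). Then T has an absolutely continuous law with density f*(t) = (1/τ_sd)·φ_{μ,σ}((Φ⁻¹(F̂(t)) − τ_mean)/τ_sd)·f̂(t)/φ(Φ⁻¹(F̂(t))), and CDF F*(t) = Φ((1/σ)·[(Φ⁻¹(F̂(t)) − τ_mean)/τ_sd − μ]). 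-/
open MeasureTheory ProbabilityTheory Filter Set
open scoped ENNReal

/-- The density of the normal distribution with mean `m` and standard deviation `s`. -/
noncomputable def normalPdf (m s u : ℝ) : ℝ :=
  (s * Real.sqrt (2 * Real.pi))⁻¹ * Real.exp (-((u - m) ^ 2) / (2 * s ^ 2))

lemma normalPdf_eq_gaussianPDFReal {s : ℝ} (hs : 0 < s) (m : ℝ) :
    normalPdf m s = gaussianPDFReal m (⟨s ^ 2, sq_nonneg s⟩ : NNReal) := by
  funext u
  have h2 : Real.sqrt (2 * Real.pi * s ^ 2) = s * Real.sqrt (2 * Real.pi) := by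
    rw [Real.sqrt_mul (by positivity), Real.sqrt_sq hs.le]; ring
  simp only [normalPdf, gaussianPDFReal, NNReal.coe_mk, h2, neg_div]
  rw [← h2]; rfl

lemma normalPdf_pos {s : ℝ} (hs : 0 < s) (m u : ℝ) : 0 < normalPdf m s u := by
  rw [normalPdf_eq_gaussianPDFReal hs]
  exact gaussianPDFReal_pos _ _ _ (fun h => (pow_pos hs 2).ne' (congrArg Subtype.val h))

lemma normalPdf_continuous {s : ℝ} (hs : 0 < s) (m : ℝ) : Continuous (normalPdf m s) := by
  unfold normalPdf; fun_prop

lemma normalPdf_integrable {s : ℝ} (hs : 0 < s) (m : ℝ) : Integrable (normalPdf m s) := by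
  rw [normalPdf_eq_gaussianPDFReal hs]
  exact integrable_gaussianPDFReal _ _

lemma normalPdf_integral_eq_one {s : ℝ} (hs : 0 < s) (m : ℝ) :
    ∫ u, normalPdf m s u = 1 := by
  rw [normalPdf_eq_gaussianPDFReal hs]
  exact integral_gaussianPDFReal_eq_one _ (fun h => (pow_pos hs 2).ne' (congrArg Subtype.val h))


section CDF
variable {f : ℝ → ℝ} (hfc : Continuous f) (hfi : Integrable f) (hfpos : ∀ x, 0 < f x)
  {Φ : ℝ → ℝ} (hΦ : ∀ x, Φ x = ∫ u in Set.Iic x, f u)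
include hfc hfi hΦ

lemma cdf_sub (x y : ℝ) : Φ y - Φ x = ∫ u in x..y, f u := by
  rw [hΦ, hΦ]
  exact intervalIntegral.integral_Iic_sub_Iic hfi.integrableOn hfi.integrableOn

lemma cdf_hasDerivAt (x : ℝ) : HasDerivAt Φ (f x) x := by
  have hfun : Φ = fun y => (∫ u in (0:ℝ)..y, f u) + Φ 0 := by
    funext y
    have := cdf_sub hfc hfi hΦ 0 y
    linarith
  rw [hfun]
  exact (intervalIntegral.integral_hasDerivAt_right (hfi.intervalIntegrable)
    (hfc.stronglyMeasurableAtFilter _ _) hfc.continuousAt).add_const _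

include hfpos

lemma cdf_strictMono : StrictMono Φ := by
  intro x y hxy
  have h := cdf_sub hfc hfi hΦ x y
  have := intervalIntegral.intervalIntegral_pos_of_pos (hfi.intervalIntegrable) hfpos hxy
  linarith

lemma cdf_mem_Ioo (htot : ∫ u, f u = 1) (x : ℝ) : Φ x ∈ Set.Ioo (0:ℝ) 1 := by
  have hnonneg : ∀ y, 0 ≤ Φ y := fun y => by
    rw [hΦ]; exact setIntegral_nonneg measurableSet_Iic fun u _ => (hfpos u).le
  constructor
  · have := cdf_strictMono hfc hfi hfpos hΦ (show x - 1 < x by linarith)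
    have := hnonneg (x - 1)
    linarith
  · have hIoi : 0 < ∫ u in Set.Ioi x, f u := by
      have h1 : ∫ u in Set.Ioc x (x+1), f u ≤ ∫ u in Set.Ioi x, f u := by
        apply setIntegral_mono_set hfi.integrableOn
          (Filter.Eventually.of_forall fun u => (hfpos u).le)
          (HasSubset.Subset.eventuallyLE Set.Ioc_subset_Ioi_self)
      have h2 : 0 < ∫ u in x..(x+1), f u :=
        intervalIntegral.intervalIntegral_pos_of_pos (hfi.intervalIntegrable) hfpos
          (by linarith)
      rw [intervalIntegral.integral_of_le (by linarith)] at h2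
      linarith
    have hsplit : Φ x + ∫ u in Set.Ioi x, f u = 1 := by
      rw [hΦ, ← htot]
      exact intervalIntegral.integral_Iic_add_Ioi hfi.integrableOn hfi.integrableOn
    linarith

end CDF

/-- derivative of a global left inverse of a C¹ function with positive derivative -/
lemma inv_hasDerivAt {F Finv f : ℝ → ℝ} (hd : ∀ t, HasDerivAt F (f t) t)
    (hfc : Continuous f) (hfpos : ∀ t, 0 < f t) (hL : ∀ t, Finv (F t) = t)
    (a : ℝ) : HasDerivAt Finv (f a)⁻¹ (F a) := by
  have hderiv : deriv F = f := funext fun x => (hd x).deriv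
  have hcd : ContDiff ℝ 1 F :=
    contDiff_one_iff_deriv.2 ⟨fun x => (hd x).differentiableAt, hderiv ▸ hfc⟩
  have hs : HasStrictDerivAt F (f a) a := by
    have := (hcd.contDiffAt (x := a)).hasStrictDerivAt one_ne_zero
    rwa [hderiv] at this
  exact (hs.to_local_left_inverse (hfpos a).ne' (Filter.Eventually.of_forall hL)).hasDerivAt

/-- 1D lintegral change of variables with `deriv` -/
lemma lintegral_image_eq_lintegral_abs_deriv_mul' {s : Set ℝ} {f f' : ℝ → ℝ}
    (hs : MeasurableSet s) (hf' : ∀ x ∈ s, HasDerivAt f (f' x) x) (hf : Set.InjOn f s)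
    (g : ℝ → ℝ≥0∞) :
    ∫⁻ x in f '' s, g x = ∫⁻ x in s, ENNReal.ofReal |f' x| * g (f x) := by
  simpa only [ContinuousLinearMap.det_toSpanSingleton] using
    MeasureTheory.lintegral_image_eq_lintegral_abs_det_fderiv_mul volume hs
      (fun x hx => ((hf' x hx).hasFDerivAt).hasFDerivWithinAt) hf g


/-- **Predictive density and CDF in the HSDM model.**
Let `Φ` be the standard normal CDF (with inverse `Φinv` on `(0,1)`), `F̂` a strictly
increasing continuously differentiable bijection of `ℝ` onto `(0,1)` with positive
derivative `f̂` (and inverse `F̂inv`), let `p ~ N(μ, σ²)`, and define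
`T := F̂⁻¹(Φ(τsd * p + τmean))`.  Then `T` has density
`f* t = (1/τsd) * φ_{μ,σ}((Φ⁻¹(F̂ t) - τmean)/τsd) * f̂ t / φ(Φ⁻¹(F̂ t))`
and CDF `F* t = Φ((1/σ) * ((Φ⁻¹(F̂ t) - τmean)/τsd - μ))`. -/
theorem hsdm_predictive_density_and_cdf
    {Ω : Type*} [MeasurableSpace Ω] (P : Measure Ω) [IsProbabilityMeasure P]
    -- the standard normal CDF and its inverse:
    (Φ Φinv : ℝ → ℝ)
    (hΦ : ∀ x, Φ x = ∫ u in Set.Iic x, normalPdf 0 1 u)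
    (hΦinvL : ∀ x, Φinv (Φ x) = x)
    (hΦinvR : ∀ y ∈ Set.Ioo (0 : ℝ) 1, Φ (Φinv y) = y)
    -- F̂ : ℝ → (0,1) strictly increasing, continuously differentiable bijection onto
    -- (0,1), with everywhere positive derivative f̂, and its inverse F̂inv:
    (Fhat Fhatinv fhat : ℝ → ℝ)
    (hFhatmono : StrictMono Fhat)
    (hFhatmem : ∀ t, Fhat t ∈ Set.Ioo (0 : ℝ) 1)
    (hFhatderiv : ∀ t, HasDerivAt Fhat (fhat t) t)
    (hfhatcont : Continuous fhat)
    (hfhatpos : ∀ t, 0 < fhat t)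
    (hFhatinvL : ∀ t, Fhatinv (Fhat t) = t)
    (hFhatinvR : ∀ y ∈ Set.Ioo (0 : ℝ) 1, Fhat (Fhatinv y) = y)
    -- p is normally distributed with mean μ and standard deviation σ:
    (μ σ : ℝ) (hσ : 0 < σ)
    (p : Ω → ℝ) (hpmeas : Measurable p)
    (hp : Measure.map p P = volume.withDensity fun u => ENNReal.ofReal (normalPdf μ σ u))
    -- the trend constants and the transformed variable T:
    (τmean τsd : ℝ) (hτsd : 0 < τsd)
    (T : Ω → ℝ) (hT : ∀ ω, T ω = Fhatinv (Φ (τsd * p ω + τmean)))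
    -- the claimed density and CDF:
    (fstar Fstar : ℝ → ℝ)
    (hfstar : ∀ t, fstar t = (1 / τsd)
      * normalPdf μ σ ((Φinv (Fhat t) - τmean) / τsd)
      * fhat t / normalPdf 0 1 (Φinv (Fhat t)))
    (hFstar : ∀ t, Fstar t = (P {ω | T ω ≤ t}).toReal) :
    Measure.map T P = (volume.withDensity fun t => ENNReal.ofReal (fstar t)) ∧
      ∀ t : ℝ, Fstar t = Φ ((1 / σ) * ((Φinv (Fhat t) - τmean) / τsd - μ)) := by
    classical
  have hf0c : Continuous (normalPdf 0 1) := normalPdf_continuous one_pos 0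
  have hf0i : Integrable (normalPdf 0 1) := normalPdf_integrable one_pos 0
  have hf0pos : ∀ x, 0 < normalPdf 0 1 x := normalPdf_pos one_pos 0
  have hf0tot : ∫ u, normalPdf 0 1 u = 1 := normalPdf_integral_eq_one one_pos 0
  have hΦmem : ∀ x, Φ x ∈ Set.Ioo (0:ℝ) 1 := cdf_mem_Ioo hf0c hf0i hf0pos hΦ hf0tot
  have hΦd : ∀ x, HasDerivAt Φ (normalPdf 0 1 x) x := cdf_hasDerivAt hf0c hf0i hΦ
  have hΦsm : StrictMono Φ := cdf_strictMono hf0c hf0i hf0pos hΦ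
  set L : ℝ → ℝ := fun x => τsd * x + τmean with hLdef
  set g : ℝ → ℝ := fun x => Fhatinv (Φ (L x)) with hgdef
  set A : ℝ → ℝ := fun t => (Φinv (Fhat t) - τmean) / τsd with hAdef
  have hLA : ∀ t, L (A t) = Φinv (Fhat t) := by
    intro t; simp only [hLdef, hAdef]; field_simp; ring
  have hFhatg : ∀ x, Fhat (g x) = Φ (L x) := fun x => hFhatinvR _ (hΦmem _)
  have hga : ∀ t, g (A t) = t := by
    intro t
    show Fhatinv (Φ (L (A t))) = t
    rw [hLA, hΦinvR _ (hFhatmem t), hFhatinvL]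
  have hAg : ∀ x, A (g x) = x := by
    intro x
    show (Φinv (Fhat (g x)) - τmean) / τsd = x
    rw [hFhatg, hΦinvL]
    show (τsd * x + τmean - τmean) / τsd = x
    field_simp
    ring
  have hgsm : StrictMono g := by
    intro x y hxy
    have h1 : Φ (L x) < Φ (L y) := hΦsm (by simp only [hLdef]; nlinarith)
    have h2 := hFhatmono.lt_iff_lt (a := g x) (b := g y)
    rw [hFhatg, hFhatg] at h2
    exact h2.1 h1
  have hgiff : ∀ x t, g x ≤ t ↔ x ≤ A t := by
    intro x t
    conv_lhs => rw [← hga t]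
    exact hgsm.le_iff_le
  have himg : ∀ t, g '' Set.Iic (A t) = Set.Iic t := by
    intro t; ext y
    simp only [Set.mem_image, Set.mem_Iic]
    constructor
    · rintro ⟨x, hx, rfl⟩; exact (hgiff x t).2 hx
    · intro hy
      refine ⟨A y, ?_, hga y⟩
      rw [← hgiff, hga]; exact hy
  have hFinvd : ∀ y ∈ Set.Ioo (0:ℝ) 1, HasDerivAt Fhatinv (fhat (Fhatinv y))⁻¹ y := by
    intro y hy
    have h := inv_hasDerivAt hFhatderiv hfhatcont hfhatpos hFhatinvL (Fhatinv y)
    rwa [hFhatinvR y hy] at h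
  set g' : ℝ → ℝ := fun x => (fhat (g x))⁻¹ * (normalPdf 0 1 (L x) * τsd) with hg'def
  have hgd : ∀ x, HasDerivAt g (g' x) x := by
    intro x
    have hLd : HasDerivAt L τsd x := by
      have := ((hasDerivAt_id x).const_mul τsd).add_const τmean
      rw [mul_one] at this; exact this
    have h2 : HasDerivAt (fun x => Φ (L x)) (normalPdf 0 1 (L x) * τsd) x :=
      (hΦd (L x)).comp x hLd
    exact (hFinvd _ (hΦmem (L x))).comp x h2
  have hg'pos : ∀ x, 0 < g' x := by
    intro x
    have h1 := hfhatpos (g x)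
    have h2 := hf0pos (L x)
    simp only [hg'def]
    positivity
  have hpoint : ∀ x, ENNReal.ofReal |g' x| * ENNReal.ofReal (fstar (g x))
      = ENNReal.ofReal (normalPdf μ σ x) := by
    intro x
    rw [abs_of_pos (hg'pos x), ← ENNReal.ofReal_mul (hg'pos x).le]
    congr 1
    have h1 : Φinv (Fhat (g x)) = L x := by rw [hFhatg, hΦinvL]
    have h2 : (L x - τmean) / τsd = x := by
      show (τsd * x + τmean - τmean) / τsd = x
      field_simp
      ring
    rw [hfstar, h1, h2]
    have h3 := (hfhatpos (g x)).ne'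
    have h4 := (hf0pos (L x)).ne'
    simp only [hg'def]
    field_simp
  have hgauss : ∀ c : ℝ, (∫⁻ x in Set.Iic c, ENNReal.ofReal (normalPdf μ σ x))
      = ENNReal.ofReal (Φ ((c - μ) / σ)) := by
    intro c
    have himg2 : (fun v => σ * v + μ) '' Set.Iic ((c - μ)/σ) = Set.Iic c := by
      ext y
      simp only [Set.mem_image, Set.mem_Iic]
      constructor
      · rintro ⟨v, hv, rfl⟩
        have h1 : σ * v ≤ σ * ((c - μ)/σ) := by nlinarith
        have h2 : σ * ((c - μ)/σ) = c - μ := by field_simp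
        linarith
      · intro hy
        exact ⟨(y - μ)/σ, by gcongr, by field_simp; ring⟩
    rw [← himg2, lintegral_image_eq_lintegral_abs_deriv_mul' measurableSet_Iic
      (fun v _ => by simpa using ((hasDerivAt_id v).const_mul σ).add_const μ)
      (fun v _ w _ h => by
        have : σ * v = σ * w := by linarith
        exact mul_left_cancel₀ hσ.ne' this)]
    have hpt : ∀ v : ℝ, ENNReal.ofReal |σ| * ENNReal.ofReal (normalPdf μ σ (σ * v + μ))
        = ENNReal.ofReal (normalPdf 0 1 v) := by
      intro v
      rw [abs_of_pos hσ, ← ENNReal.ofReal_mul hσ.le]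
      congr 1
      simp only [normalPdf]
      have hexp : -((σ * v + μ - μ) ^ 2) / (2 * σ ^ 2) = -((v - 0) ^ 2) / (2 * 1 ^ 2) := by
        field_simp
        ring
      rw [hexp]
      have : Real.sqrt (2 * Real.pi) ≠ 0 := by positivity
      field_simp
    simp only [hpt]
    rw [← MeasureTheory.ofReal_integral_eq_lintegral_ofReal hf0i.restrict
      (Filter.Eventually.of_forall fun x => (hf0pos x).le), ← hΦ]
  have hTg : ∀ ω, T ω = g (p ω) := fun ω => hT ω
  have hTmeas : Measurable T := by
    have : T = g ∘ p := funext hTg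
    rw [this]
    exact (hgsm.monotone.measurable).comp hpmeas
  have hpre : ∀ t, T ⁻¹' Set.Iic t = p ⁻¹' Set.Iic (A t) := by
    intro t; ext ω
    simp only [Set.mem_preimage, Set.mem_Iic, hTg ω]
    exact hgiff (p ω) t
  have key1 : ∀ t, Measure.map T P (Set.Iic t)
      = ∫⁻ x in Set.Iic (A t), ENNReal.ofReal (normalPdf μ σ x) := by
    intro t
    rw [Measure.map_apply hTmeas measurableSet_Iic, hpre t,
      ← Measure.map_apply hpmeas measurableSet_Iic, hp,
      withDensity_apply _ measurableSet_Iic]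
  have key2 : ∀ t, (volume.withDensity fun s => ENNReal.ofReal (fstar s)) (Set.Iic t)
      = ∫⁻ x in Set.Iic (A t), ENNReal.ofReal (normalPdf μ σ x) := by
    intro t
    rw [withDensity_apply _ measurableSet_Iic, ← himg t,
      lintegral_image_eq_lintegral_abs_deriv_mul' measurableSet_Iic
        (fun x _ => hgd x) (hgsm.injective.injOn)]
    simp only [hpoint]
  have hIic : ∀ t, Measure.map T P (Set.Iic t)
      = (volume.withDensity fun s => ENNReal.ofReal (fstar s)) (Set.Iic t) :=
    fun t => (key1 t).trans (key2 t).symm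
  haveI : IsProbabilityMeasure (Measure.map T P) :=
    Measure.isProbabilityMeasure_map hTmeas.aemeasurable
  haveI : IsFiniteMeasure (volume.withDensity fun s => ENNReal.ofReal (fstar s)) := by
    constructor
    have huniv : (⋃ n : ℕ, Set.Iic (n:ℝ)) = Set.univ := by
      ext x
      simp only [Set.mem_iUnion, Set.mem_Iic, Set.mem_univ, iff_true]
      exact exists_nat_ge x
    have hmono : Monotone fun n : ℕ => Set.Iic (n:ℝ) :=
      fun n m h => Set.Iic_subset_Iic.2 (Nat.cast_le.2 h)
    rw [← huniv, hmono.directed_le.measure_iUnion]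
    refine lt_of_le_of_lt (iSup_le fun n => ?_) ENNReal.one_lt_top
    rw [← hIic]
    exact prob_le_one
  constructor
  · exact Measure.ext_of_Iic (Measure.map T P) _ hIic
  · intro t
    have h1 : P {ω | T ω ≤ t} = Measure.map T P (Set.Iic t) := by
      rw [Measure.map_apply hTmeas measurableSet_Iic]
      rfl
    rw [hFstar, h1, key1 t, hgauss (A t), ENNReal.toReal_ofReal (hΦmem _).1.le]
    congr 1
    show (A t - μ) / σ = 1 / σ * (A t - μ)
    ring
end
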